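/- arXiv:2302.03300 — 2 statements merged into one kernel-verified Lean document; each statement's English description precedes it below -/
import Mathlib

section
/- Let L⁻, L⁺ : Ω → 𝕍⁺ be Borel measurable with L⁻ ≤_l L⁺, and set 𝕃₀ := { L : Ω → 𝕍⁺ Borel measurable : L⁻ ≤_l L and L ≤_l L⁺ }. Then every nonempty subset Γ ⊆ 𝕃₀ admits a least upper bound and a greatest lower bound in (𝕃₀, ≤_l): there exists L̄ ∈ 𝕃₀ with L ≤_l L̄ for all L ∈ Γ and such that L̄ ≤_l M for every M ∈ 𝕃₀ satisfying L ≤_l M for all L ∈ Γ; and there exists L̲ ∈ 𝕃₀ with the symmetric greatest-lower-bound property. -/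
open MeasureTheory Filter Set Topology

noncomputable section

/-- Membership in the space `𝕍⁺` of nondecreasing, left-continuous functions
`v : [0,T) → ℝ ∪ {−∞}` with `v 0 = −∞` and `v` real-valued on `(0,T)`
(encoded as functions `ℝ → WithBot ℝ`, normalized to `⊥` outside `(0,T)`;
left-continuity of a nondecreasing function is expressed in order-theoretic
terms: `v t` is the least upper bound of the values of `v` on `[0,t)`). -/
def InVPlus (T : ℝ) (v : ℝ → WithBot ℝ) : Prop :=
  (∀ t : ℝ, t ∉ Set.Ioo 0 T → v t = ⊥) ∧
  (∀ s t : ℝ, 0 ≤ s → s ≤ t → t < T → v s ≤ v t) ∧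
  (∀ t : ℝ, t ∈ Set.Ioo 0 T → v t ≠ ⊥) ∧
  (∀ t : ℝ, t ∈ Set.Ioo 0 T → IsLUB (v '' Set.Ico 0 t) (v t))

/-- The Lévy metric `d_L` on `𝕍⁺`:
`d_L(v₁,v₂) = inf {ε ≥ 0 : v₁((t−ε)∨0) − ε ≤ v₂(t), v₂((t−ε)∨0) − ε ≤ v₁(t), ∀ t ∈ (0,T)}`. -/
noncomputable def dL (T : ℝ) (v₁ v₂ : ℝ → WithBot ℝ) : ℝ :=
  sInf {ε : ℝ | 0 ≤ ε ∧ ∀ t : ℝ, t ∈ Set.Ioo 0 T →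
    (v₁ (max (t - ε) 0)).map (fun x => x - ε) ≤ v₂ t ∧
    (v₂ (max (t - ε) 0)).map (fun x => x - ε) ≤ v₁ t}

/-- The Polish space `(𝕍⁺, d_L)`, as a type. -/
structure VPlus (T : ℝ) where
  toFun : ℝ → WithBot ℝ
  mem : InVPlus T toFun

/-- The metric topology of `d_L` on `𝕍⁺` (generated by the open balls). -/
instance (T : ℝ) : TopologicalSpace (VPlus T) :=
  TopologicalSpace.generateFrom
    {U : Set (VPlus T) | ∃ v : VPlus T, ∃ ε : ℝ, 0 < ε ∧
      U = {w : VPlus T | dL T v.toFun w.toFun < ε}}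

/-- The Borel σ-algebra of `(𝕍⁺, d_L)`. -/
instance (T : ℝ) : MeasurableSpace (VPlus T) := borel (VPlus T)

/-- The partial order `≤_l` on `𝕍⁺`-valued random elements:
`L¹ ≤_l L²` iff for every `t ∈ [0,T)`, `L¹(ω)(t) ≤ L²(ω)(t)` for ℙ-a.e. `ω`. -/
def lel (T : ℝ) {Ω : Type*} [MeasurableSpace Ω] (P : Measure Ω)
    (L₁ L₂ : Ω → VPlus T) : Prop :=
  ∀ t : ℝ, 0 ≤ t → t < T → ∀ᵐ ω ∂P, (L₁ ω).toFun t ≤ (L₂ ω).toFun t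

/-- Membership in the lattice `𝕃₀` of Borel measurable `L : Ω → 𝕍⁺` with
`L⁻ ≤_l L ≤_l L⁺`. -/
def MemL0 (T : ℝ) {Ω : Type*} [MeasurableSpace Ω] (P : Measure Ω)
    (Lm Lp L : Ω → VPlus T) : Prop :=
  Measurable L ∧ lel T P Lm L ∧ lel T P L Lp

/-! ### WithBot helpers -/

lemma map_sub_le_coe_iff {a : WithBot ℝ} {q x : ℝ} :
    a.map (fun y => y - q) ≤ (x : WithBot ℝ) ↔ a ≤ ((x + q : ℝ) : WithBot ℝ) := by
  cases a with
  | bot => simp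
  | coe y =>
    rw [WithBot.map_coe, WithBot.coe_le_coe, WithBot.coe_le_coe]
    exact sub_le_iff_le_add

lemma map_sub_mono {a b : WithBot ℝ} (q : ℝ) (h : a ≤ b) :
    a.map (fun y => y - q) ≤ b.map (fun y => y - q) := by
  cases a with
  | bot => simp
  | coe y =>
    cases b with
    | bot => simp at h
    | coe z =>
      simp only [WithBot.map_coe, WithBot.coe_le_coe] at h ⊢
      linarith

lemma map_sub_anti {a : WithBot ℝ} {q q' : ℝ} (h : q ≤ q') :
    a.map (fun y => y - q') ≤ a.map (fun y => y - q) := by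
  cases a with
  | bot => simp
  | coe y => simp only [WithBot.map_coe, WithBot.coe_le_coe]; linarith

lemma map_sub_zero (a : WithBot ℝ) : a.map (fun y => y - (0:ℝ)) = a := by
  cases a <;> simp

lemma map_sub_map_sub (a : WithBot ℝ) (p q : ℝ) :
    (a.map (fun y => y - p)).map (fun y => y - q) = a.map (fun y => y - (p + q)) := by
  cases a with
  | bot => simp
  | coe y => simp [WithBot.map_coe]; ring

lemma coe_le_of_map_sub_le {y : ℝ} {a : WithBot ℝ} {q : ℝ} (h : (y : WithBot ℝ) ≤ a) :
    ((y - q : ℝ) : WithBot ℝ) ≤ a.map (fun x => x - q) := by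
  have := map_sub_mono q h
  simpa using this

lemma exists_lt_of_csInf_lt' {s : Set (WithBot ℝ)} (hne : s.Nonempty) {b : WithBot ℝ}
    (h : sInf s < b) : ∃ a ∈ s, a < b := by
  by_contra hcon
  push_neg at hcon
  exact absurd (le_csInf hne hcon) (not_le.2 h)

/-! ### VPlus basic lemmas -/

namespace VPlus

variable {T : ℝ}

lemma bot' (v : VPlus T) {t : ℝ} (h : t ∉ Set.Ioo 0 T) : v.toFun t = ⊥ := v.mem.1 t h

lemma mono (v : VPlus T) {s t : ℝ} (h0 : 0 ≤ s) (hst : s ≤ t) (ht : t < T) :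
    v.toFun s ≤ v.toFun t := v.mem.2.1 s t h0 hst ht

lemma ne_bot (v : VPlus T) {t : ℝ} (h : t ∈ Set.Ioo 0 T) : v.toFun t ≠ ⊥ := v.mem.2.2.1 t h

lemma lub (v : VPlus T) {t : ℝ} (h : t ∈ Set.Ioo 0 T) :
    IsLUB (v.toFun '' Set.Ico 0 t) (v.toFun t) := v.mem.2.2.2 t h

/-- existence of the real value -/
lemma exists_coe (v : VPlus T) {t : ℝ} (h : t ∈ Set.Ioo 0 T) :
    ∃ x : ℝ, v.toFun t = (x : WithBot ℝ) := by
  cases hv : v.toFun t with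
  | bot => exact absurd hv (v.ne_bot h)
  | coe x => exact ⟨x, rfl⟩

/-- value at `t` is below `b` provided all rational values strictly below `t` are. -/
lemma le_of_rat (v : VPlus T) {t : ℝ} (ht : t ∈ Set.Ioo 0 T) {b : WithBot ℝ}
    (h : ∀ r : ℚ, 0 < (r : ℝ) → (r : ℝ) < t → v.toFun r ≤ b) : v.toFun t ≤ b := by
  refine (v.lub ht).2 ?_
  rintro x ⟨s, hs, rfl⟩
  rcases le_or_gt s 0 with hs0 | hs0
  · rcases lt_or_eq_of_le hs0 with h' | h'
    · rw [v.bot' (by intro hmem; exact absurd hmem.1 (not_lt.2 hs0))]; exact bot_le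
    · rw [v.bot' (by rw [← h']; intro hmem; exact lt_irrefl _ hmem.1)]; exact bot_le
  · obtain ⟨r, hr1, hr2⟩ := exists_rat_btwn hs.2
    exact le_trans (v.mono (le_of_lt hs0) (le_of_lt hr1) (lt_trans hr2 ht.2)) (h r (lt_trans hs0 hr1) hr2)

end VPlus

/-! ### The `S`-set of the Lévy metric -/

def SC (T : ℝ) (v₁ v₂ : ℝ → WithBot ℝ) (ε : ℝ) : Prop :=
  0 ≤ ε ∧ ∀ t : ℝ, t ∈ Set.Ioo 0 T →
    (v₁ (max (t - ε) 0)).map (fun x => x - ε) ≤ v₂ t ∧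
    (v₂ (max (t - ε) 0)).map (fun x => x - ε) ≤ v₁ t

lemma dL_eq (T : ℝ) (v₁ v₂ : ℝ → WithBot ℝ) : dL T v₁ v₂ = sInf {ε | SC T v₁ v₂ ε} := rfl

variable {T : ℝ}

lemma SC.symm {v₁ v₂ : ℝ → WithBot ℝ} {ε : ℝ} (h : SC T v₁ v₂ ε) : SC T v₂ v₁ ε :=
  ⟨h.1, fun t ht => ⟨(h.2 t ht).2, (h.2 t ht).1⟩⟩

/-- one-sided condition monotone in ε -/
lemma condAt_mono (A : VPlus T) (B : ℝ → WithBot ℝ) {ε ε' t : ℝ} (ht : t ∈ Set.Ioo 0 T)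
    (hε : 0 ≤ ε) (hee : ε ≤ ε')
    (h : (A.toFun (max (t - ε) 0)).map (fun x => x - ε) ≤ B t) :
    (A.toFun (max (t - ε') 0)).map (fun x => x - ε') ≤ B t := by
  refine le_trans (le_trans (map_sub_anti hee) (map_sub_mono ε ?_)) h
  refine A.mono (le_max_right _ _) (max_le_max (by linarith) le_rfl) ?_
  exact max_lt (by linarith [ht.2]) (lt_trans ht.1 ht.2)

lemma SC.mono {v₁ v₂ : VPlus T} {ε ε' : ℝ} (h : SC T v₁.toFun v₂.toFun ε) (hee : ε ≤ ε') :
    SC T v₁.toFun v₂.toFun ε' :=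
  ⟨le_trans h.1 hee, fun t ht =>
    ⟨condAt_mono v₁ v₂.toFun ht h.1 hee (h.2 t ht).1,
     condAt_mono v₂ v₁.toFun ht h.1 hee (h.2 t ht).2⟩⟩

lemma SC_T (hT : 0 < T) (v₁ v₂ : VPlus T) : SC T v₁.toFun v₂.toFun T := by
  refine ⟨le_of_lt hT, fun t ht => ?_⟩
  have h0 : max (t - T) 0 = 0 := max_eq_right (by linarith [ht.2])
  have e1 : v₁.toFun 0 = ⊥ := v₁.bot' (by simp)
  have e2 : v₂.toFun 0 = ⊥ := v₂.bot' (by simp)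
  rw [h0, e1, e2, WithBot.map_bot]
  exact ⟨bot_le, bot_le⟩

lemma SC_self (v : VPlus T) : SC T v.toFun v.toFun 0 := by
  refine ⟨le_rfl, fun t ht => ?_⟩
  have h0 : max (t - 0) 0 = t := by rw [sub_zero]; exact max_eq_left (le_of_lt ht.1)
  rw [h0, map_sub_zero]
  exact ⟨le_rfl, le_rfl⟩

lemma SC_bddBelow (v₁ v₂ : ℝ → WithBot ℝ) : BddBelow {ε | SC T v₁ v₂ ε} :=
  ⟨0, fun _ hx => hx.1⟩

lemma dL_le {v₁ v₂ : VPlus T} {ε : ℝ} (h : SC T v₁.toFun v₂.toFun ε) :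
    dL T v₁.toFun v₂.toFun ≤ ε := by
  rw [dL_eq]; exact csInf_le (SC_bddBelow _ _) h

lemma dL_nonneg (hT : 0 < T) (v₁ v₂ : VPlus T) : 0 ≤ dL T v₁.toFun v₂.toFun := by
  rw [dL_eq]
  exact le_csInf ⟨T, SC_T hT v₁ v₂⟩ fun x hx => hx.1

lemma dL_lt_iff (hT : 0 < T) {v₁ v₂ : VPlus T} {ε : ℝ} :
    dL T v₁.toFun v₂.toFun < ε ↔ ∃ δ, SC T v₁.toFun v₂.toFun δ ∧ δ < ε := by
  rw [dL_eq]
  rw [csInf_lt_iff (SC_bddBelow _ _) ⟨T, SC_T hT v₁ v₂⟩]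
  constructor
  · rintro ⟨x, hx, hlt⟩; exact ⟨x, hx, hlt⟩
  · rintro ⟨x, hx, hlt⟩; exact ⟨x, hx, hlt⟩

lemma dL_comm (v₁ v₂ : ℝ → WithBot ℝ) : dL T v₁ v₂ = dL T v₂ v₁ := by
  rw [dL_eq, dL_eq]
  congr 1
  ext ε
  exact ⟨fun h => h.symm, fun h => h.symm⟩

lemma dL_self (hT : 0 < T) (v : VPlus T) : dL T v.toFun v.toFun = 0 :=
  le_antisymm (dL_le (SC_self v)) (dL_nonneg hT v v)

lemma SC.add {v₁ v₂ v₃ : VPlus T} {a b : ℝ} (h₁ : SC T v₁.toFun v₂.toFun a)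
    (h₂ : SC T v₂.toFun v₃.toFun b) : SC T v₁.toFun v₃.toFun (a + b) := by
  have ha := h₁.1; have hb := h₂.1
  refine ⟨by linarith, fun t ht => ?_⟩
  constructor
  · -- v₁(max(t-a-b,0)) - (a+b) ≤ v₃ t
    rcases le_or_gt t b with htb | htb
    · have h0 : max (t - (a+b)) 0 = 0 := max_eq_right (by linarith)
      rw [h0, v₁.bot' (by simp), WithBot.map_bot]; exact bot_le
    · set u := t - b with hu
      have hui : u ∈ Set.Ioo 0 T := ⟨by linarith, by linarith [ht.2]⟩
      have c1 := (h₁.2 u hui).1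
      have c2 := (h₂.2 t ht).1
      have humax : max (t - b) 0 = u := max_eq_left (by linarith)
      rw [humax] at c2
      have key : max (u - a) 0 = max (t - (a + b)) 0 := by rw [hu]; ring_nf
      rw [key] at c1
      calc (v₁.toFun (max (t - (a+b)) 0)).map (fun x => x - (a+b))
          = ((v₁.toFun (max (t - (a+b)) 0)).map (fun x => x - a)).map (fun x => x - b) := by
            rw [map_sub_map_sub]
        _ ≤ (v₂.toFun u).map (fun x => x - b) := map_sub_mono b c1
        _ ≤ v₃.toFun t := c2
  · rcases le_or_gt t a with hta | hta
    · have h0 : max (t - (a+b)) 0 = 0 := max_eq_right (by linarith)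
      rw [h0, v₃.bot' (by simp), WithBot.map_bot]; exact bot_le
    · set u := t - a with hu
      have hui : u ∈ Set.Ioo 0 T := ⟨by linarith, by linarith [ht.2]⟩
      have c1 := (h₂.2 u hui).2
      have c2 := (h₁.2 t ht).2
      have humax : max (t - a) 0 = u := max_eq_left (by linarith)
      rw [humax] at c2
      have key : max (u - b) 0 = max (t - (a + b)) 0 := by rw [hu]; ring_nf
      rw [key] at c1
      calc (v₃.toFun (max (t - (a+b)) 0)).map (fun x => x - (a+b))
          = ((v₃.toFun (max (t - (a+b)) 0)).map (fun x => x - b)).map (fun x => x - a) := by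
            rw [add_comm a b]; exact (map_sub_map_sub _ b a).symm
        _ ≤ (v₂.toFun u).map (fun x => x - a) := map_sub_mono a c1
        _ ≤ v₁.toFun t := c2

lemma dL_triangle (hT : 0 < T) (v₁ v₂ v₃ : VPlus T) :
    dL T v₁.toFun v₃.toFun ≤ dL T v₁.toFun v₂.toFun + dL T v₂.toFun v₃.toFun := by
  refine le_of_forall_pos_le_add fun ε hε => ?_
  obtain ⟨a, ha, halt⟩ := (dL_lt_iff hT (v₁ := v₁) (v₂ := v₂)).1
    (lt_add_of_pos_right _ (by linarith : (0:ℝ) < ε/2))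
  obtain ⟨b, hb, hblt⟩ := (dL_lt_iff hT (v₁ := v₂) (v₂ := v₃)).1
    (lt_add_of_pos_right _ (by linarith : (0:ℝ) < ε/2))
  have := dL_le (ha.add hb)
  linarith

/-- One-sided Lévy condition at a point. -/
def condAt (v w : ℝ → WithBot ℝ) (q t : ℝ) : Prop :=
  (v (max (t - q) 0)).map (fun x => x - q) ≤ w t

/-- density lemma: the one-sided condition at all rational points implies it everywhere. -/
lemma condAt_of_rat (A B : VPlus T) {q : ℝ} (hq : 0 ≤ q)
    (h : ∀ r : ℚ, 0 < (r : ℝ) → (r : ℝ) < T → condAt A.toFun B.toFun q r)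
    {t : ℝ} (ht : t ∈ Set.Ioo 0 T) : condAt A.toFun B.toFun q t := by
  unfold condAt
  rcases le_or_gt t q with htq | htq
  · have h0 : max (t - q) 0 = 0 := max_eq_right (by linarith)
    have e1 : A.toFun 0 = ⊥ := A.bot' (by simp)
    rw [h0, e1, WithBot.map_bot]; exact bot_le
  · have ha : t - q ∈ Set.Ioo 0 T := ⟨by linarith, by linarith [ht.2]⟩
    have h0 : max (t - q) 0 = t - q := max_eq_left (by linarith)
    rw [h0]
    obtain ⟨b, hb⟩ := B.exists_coe ht
    rw [hb, map_sub_le_coe_iff]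
    refine (A.lub ha).2 ?_
    rintro x ⟨s, hs, rfl⟩
    rcases le_or_gt s 0 with hs0 | hs0
    · have : A.toFun s = ⊥ := A.bot' (fun hmem => absurd hmem.1 (not_lt.2 hs0))
      rw [this]; exact bot_le
    · obtain ⟨r, hr1, hr2⟩ := exists_rat_btwn (show s + q < t by linarith [hs.2])
      have hr0 : 0 < (r : ℝ) := by linarith
      have hrT : (r : ℝ) < T := by linarith [ht.2]
      have hcond := h r hr0 hrT
      unfold condAt at hcond
      have hrq : max ((r : ℝ) - q) 0 = (r : ℝ) - q := max_eq_left (by linarith)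
      rw [hrq] at hcond
      have h1 : A.toFun s ≤ A.toFun ((r : ℝ) - q) :=
        A.mono (le_of_lt hs0) (by linarith) (by linarith)
      have h2 : B.toFun r ≤ B.toFun t := B.mono (by linarith) (le_of_lt hr2) ht.2
      rw [hb] at h2
      have := le_trans (map_sub_mono q h1) (le_trans hcond h2)
      rwa [map_sub_le_coe_iff] at this
      
lemma SC_of_rat (v w : VPlus T) {q : ℝ} (hq : 0 ≤ q)
    (h : ∀ r : ℚ, 0 < (r : ℝ) → (r : ℝ) < T →
      condAt v.toFun w.toFun q r ∧ condAt w.toFun v.toFun q r) :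
    SC T v.toFun w.toFun q :=
  ⟨hq, fun t ht =>
    ⟨condAt_of_rat v w hq (fun r h1 h2 => (h r h1 h2).1) ht,
     condAt_of_rat w v hq (fun r h1 h2 => (h r h1 h2).2) ht⟩⟩

/-- Rational characterization of `dL < ε`.  -/
lemma dL_lt_iff_rat (hT : 0 < T) {v w : VPlus T} {ε : ℝ} :
    dL T v.toFun w.toFun < ε ↔ ∃ q : ℚ, 0 ≤ (q : ℝ) ∧ (q : ℝ) < ε ∧
      ∀ r : ℚ, 0 < (r : ℝ) → (r : ℝ) < T →
        condAt v.toFun w.toFun (q : ℝ) r ∧ condAt w.toFun v.toFun (q : ℝ) r := by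
  constructor
  · intro hlt
    obtain ⟨δ, hδ, hδlt⟩ := (dL_lt_iff hT).1 hlt
    obtain ⟨q, hq1, hq2⟩ := exists_rat_btwn hδlt
    have hSC : SC T v.toFun w.toFun (q : ℝ) := hδ.mono (le_of_lt hq1)
    exact ⟨q, le_trans hδ.1 (le_of_lt hq1), hq2,
      fun r h1 h2 => ⟨(hSC.2 r ⟨h1, h2⟩).1, (hSC.2 r ⟨h1, h2⟩).2⟩⟩
  · rintro ⟨q, hq0, hqε, h⟩
    exact lt_of_le_of_lt (dL_le (SC_of_rat v w hq0 h)) hqε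

/-! ### Openness of super-level evaluation sets -/

lemma ball_isOpen (v : VPlus T) {ε : ℝ} (hε : 0 < ε) :
    IsOpen {w : VPlus T | dL T v.toFun w.toFun < ε} :=
  TopologicalSpace.isOpen_generateFrom_of_mem ⟨v, ε, hε, rfl⟩

lemma mem_ball_self (hT : 0 < T) (v : VPlus T) {ε : ℝ} (hε : 0 < ε) :
    v ∈ {w : VPlus T | dL T v.toFun w.toFun < ε} := by
  simp only [Set.mem_setOf_eq, dL_self hT v]; exact hε

lemma isOpen_eval_gt (hT : 0 < T) (s : ℝ) (c : WithBot ℝ) :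
    IsOpen {w : VPlus T | c < w.toFun s} := by
  rcases Classical.em (s ∈ Set.Ioo 0 T) with hs | hs
  · cases c with
    | bot =>
      have : {w : VPlus T | ⊥ < w.toFun s} = Set.univ := by
        ext w; simp [bot_lt_iff_ne_bot.2 (w.ne_bot hs)]
      rw [this]; exact isOpen_univ
    | coe x =>
      rw [isOpen_iff_forall_mem_open]
      intro w hw
      simp only [Set.mem_setOf_eq] at hw
      -- find s' < s with w s' > x
      have hlub := w.lub hs
      have hex : ∃ s' ∈ Set.Ico 0 s, (x : WithBot ℝ) < w.toFun s' := by
        by_contra hcon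
        push_neg at hcon
        have : w.toFun s ≤ (x : WithBot ℝ) := hlub.2 (by rintro y ⟨s', hs', rfl⟩; exact hcon s' hs')
        exact absurd hw (not_lt.2 this)
      obtain ⟨s', hs', hws'⟩ := hex
      have hs'0 : 0 < s' := by
        rcases lt_or_eq_of_le hs'.1 with h' | h'
        · exact h'
        · exfalso
          have : w.toFun s' = ⊥ := w.bot' (by rw [← h']; simp)
          rw [this] at hws'; exact absurd hws' (by simp)
      obtain ⟨y, hy⟩ := w.exists_coe (⟨hs'0, lt_trans hs'.2 hs.2⟩ : s' ∈ Set.Ioo 0 T)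
      rw [hy, WithBot.coe_lt_coe] at hws'
      set δ := min (s - s') (y - x) with hδdef
      have hδ : 0 < δ := lt_min (by linarith [hs'.2]) (by linarith)
      refine ⟨{u : VPlus T | dL T w.toFun u.toFun < δ}, ?_, ball_isOpen w hδ, mem_ball_self hT w hδ⟩
      intro u hu
      simp only [Set.mem_setOf_eq] at hu ⊢
      obtain ⟨δ', hδ', hδ'lt⟩ := (dL_lt_iff hT).1 hu
      have hcond := (hδ'.2 s hs).1
      have harg : s' ≤ max (s - δ') 0 := le_max_of_le_left (by
        have : δ' < s - s' := lt_of_lt_of_le hδ'lt (min_le_left _ _)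
        linarith)
      have h1 : w.toFun s' ≤ w.toFun (max (s - δ') 0) :=
        w.mono (le_of_lt hs'0) harg (max_lt (by linarith [hs.2, hδ'.1]) (lt_trans hs.1 hs.2))
      have h2 : ((y - δ' : ℝ) : WithBot ℝ) ≤ (w.toFun (max (s - δ') 0)).map (fun z => z - δ') := by
        rw [hy] at h1
        exact coe_le_of_map_sub_le h1
      have h3 : ((y - δ' : ℝ) : WithBot ℝ) ≤ u.toFun s := le_trans h2 hcond
      refine lt_of_lt_of_le ?_ h3
      rw [WithBot.coe_lt_coe]
      have : δ' < y - x := lt_of_lt_of_le hδ'lt (min_le_right _ _)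
      linarith
  · have hb : ∀ w : VPlus T, w.toFun s = ⊥ := fun w => w.bot' hs
    have : {w : VPlus T | c < w.toFun s} = ∅ := by
      ext w; simp [hb w, not_lt_bot]
    rw [this]; exact isOpen_empty

/-! ### A countable dense family of step functions -/

/-- the constant-0 element of `𝕍⁺` -/
def vZero (hT : 0 < T) : VPlus T where
  toFun := fun t => if 0 < t ∧ t < T then ((0:ℝ) : WithBot ℝ) else ⊥
  mem := by
    refine ⟨fun t ht => if_neg (by simpa [Set.mem_Ioo] using ht), ?_, ?_, ?_⟩
    · intro s t h0 hst htT
      dsimp only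
      by_cases hs : 0 < s ∧ s < T
      · rw [if_pos hs, if_pos ⟨lt_of_lt_of_le hs.1 hst, htT⟩]
      · rw [if_neg hs]; exact bot_le
    · intro t ht; dsimp only; rw [if_pos (by simpa [Set.mem_Ioo] using ht)]; simp
    · intro t ht
      dsimp only
      rw [if_pos (by simpa [Set.mem_Ioo] using ht)]
      constructor
      · rintro y ⟨s, hs, rfl⟩
        dsimp only
        by_cases h's : 0 < s ∧ s < T
        · rw [if_pos h's]
        · rw [if_neg h's]; exact bot_le
      · intro b hb
        have hmem : (t/2) ∈ Set.Ico 0 t := ⟨by linarith [ht.1], by linarith [ht.1]⟩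
        have h2 := hb ⟨t/2, hmem, rfl⟩
        dsimp only at h2
        rwa [if_pos ⟨by linarith [ht.1], by linarith [ht.2, ht.1]⟩] at h2

/-- running maximum of a sequence of rationals -/
def runMax (f : ℕ → ℚ) : ℕ → ℚ
  | 0 => f 0
  | (n+1) => max (runMax f n) (f (n+1))

lemma runMax_mono (f : ℕ → ℚ) : Monotone (runMax f) :=
  monotone_nat_of_le_succ fun n => le_max_left _ _

lemma le_runMax (f : ℕ → ℚ) (n : ℕ) : f n ≤ runMax f n := by
  cases n with
  | zero => exact le_rfl
  | succ m => exact le_max_right _ _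

lemma runMax_le (f : ℕ → ℚ) (c : ℝ) (n : ℕ) (h : ∀ j ≤ n, (f j : ℝ) ≤ c) :
    ((runMax f n : ℚ) : ℝ) ≤ c := by
  induction n with
  | zero => exact h 0 le_rfl
  | succ m ih =>
    have : ((max (runMax f m) (f (m+1)) : ℚ) : ℝ) = max ((runMax f m : ℚ) : ℝ) ((f (m+1) : ℚ) : ℝ) := by
      push_cast; rfl
    rw [runMax, this]
    exact max_le (ih fun j hj => h j (le_trans hj (Nat.le_succ m))) (h (m+1) le_rfl)

/-- index of the step containing `t` -/
def stepIdx (δ t : ℝ) : ℕ := (⌈t / δ⌉.toNat - 1) ⊔ 1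

lemma stepIdx_mono (δ : ℝ) (hδ : 0 < δ) {s t : ℝ} (h : s ≤ t) : stepIdx δ s ≤ stepIdx δ t := by
  unfold stepIdx
  have h1 : ⌈s / δ⌉ ≤ ⌈t / δ⌉ := Int.ceil_le_ceil (by gcongr)
  exact sup_le_sup_right (Nat.sub_le_sub_right (Int.toNat_le_toNat h1) 1) 1

/-- step function -/
def stepFun (T δ : ℝ) (G : ℕ → ℚ) : ℝ → WithBot ℝ := fun t =>
  if 0 < t ∧ t < T then (((G (stepIdx δ t) : ℚ) : ℝ) : WithBot ℝ) else ⊥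

lemma stepFun_inVPlus (hT : 0 < T) {δ : ℝ} (hδ : 0 < δ) {G : ℕ → ℚ} (hG : Monotone G) :
    InVPlus T (stepFun T δ G) := by
  have hmono : ∀ s t : ℝ, 0 ≤ s → s ≤ t → t < T → stepFun T δ G s ≤ stepFun T δ G t := by
    intro s t h0 hst htT
    unfold stepFun
    by_cases hs : 0 < s ∧ s < T
    · rw [if_pos hs, if_pos ⟨lt_of_lt_of_le hs.1 hst, htT⟩, WithBot.coe_le_coe]
      exact_mod_cast hG (stepIdx_mono δ hδ hst)
    · rw [if_neg hs]; exact bot_le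
  refine ⟨fun t ht => if_neg (by simpa [Set.mem_Ioo] using ht), hmono, ?_, ?_⟩
  · intro t ht
    unfold stepFun
    rw [if_pos (by simpa [Set.mem_Ioo] using ht)]; simp
  · intro t ht
    constructor
    · rintro y ⟨s, hs, rfl⟩
      exact hmono s t hs.1 (le_of_lt hs.2) ht.2
    · intro b hb
      -- find s < t in the same step
      set k : ℤ := ⌈t / δ⌉ with hk
      have hk1 : 1 ≤ k := by
        rw [hk]; exact Int.ceil_pos.2 (div_pos ht.1 hδ) 
      have hkd : ((k : ℝ) - 1) * δ < t := by
        have : ((k - 1 : ℤ) : ℝ) < t / δ := Int.lt_ceil.1 (by omega)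
        rw [lt_div_iff₀ hδ] at this
        push_cast at this
        linarith
      set l : ℝ := max (((k : ℝ) - 1) * δ) (t / 2) with hl
      have hlt : l < t := max_lt hkd (by linarith [ht.1])
      set s : ℝ := (l + t) / 2 with hs
      have hs_lt : s < t := by rw [hs]; linarith
      have hs_gt_l : l < s := by rw [hs]; linarith
      have hs_pos : 0 < s := lt_of_le_of_lt (by linarith [ht.1] : (0:ℝ) ≤ t/2) (lt_of_le_of_lt (le_max_right _ _) hs_gt_l)
      have hceil : ⌈s / δ⌉ = k := by
        have h1 : k - 1 < ⌈s / δ⌉ := Int.lt_ceil.2 (by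
          rw [lt_div_iff₀ hδ]
          push_cast
          calc ((k:ℝ) - 1) * δ ≤ l := le_max_left _ _
            _ < s := hs_gt_l)
        have h2 : ⌈s / δ⌉ ≤ k := Int.ceil_le.2 (by
          rw [div_le_iff₀ hδ]
          calc s ≤ t := le_of_lt hs_lt
            _ ≤ (k : ℝ) * δ := by
              have := Int.le_ceil (t / δ)
              rw [← hk] at this
              rw [← div_le_iff₀ hδ]; exact this)
        omega
      have hval : stepFun T δ G s = stepFun T δ G t := by
        unfold stepFun
        rw [if_pos ⟨hs_pos, lt_trans hs_lt ht.2⟩, if_pos (by simpa [Set.mem_Ioo] using ht)]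
        unfold stepIdx
        rw [hceil, ← hk]
      have := hb ⟨s, ⟨le_of_lt hs_pos, hs_lt⟩, rfl⟩
      rwa [hval] at this

/-- the countable family -/
def densePt (hT : 0 < T) (p : Σ n : ℕ, Fin n → ℚ) : VPlus T :=
  if h : 2 ≤ p.1 then
    ⟨stepFun T (T / p.1) (runMax (fun j => if hj : j < p.1 then p.2 ⟨j, hj⟩ else 0)),
      stepFun_inVPlus hT (div_pos hT (by positivity)) (runMax_mono _)⟩
  else vZero hT

lemma densePt_dense (hT : 0 < T) (v : VPlus T) {ε : ℝ} (hε : 0 < ε) :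
    ∃ p : Σ n : ℕ, Fin n → ℚ, SC T v.toFun (densePt hT p).toFun ε := by
  obtain ⟨N0, hN0⟩ := exists_nat_gt (T / ε)
  set N : ℕ := max N0 2 with hNdef
  have hN2 : 2 ≤ N := le_max_right _ _
  have hNpos : 0 < (N : ℝ) := by positivity
  set δ : ℝ := T / (N : ℝ) with hδdef
  have hδpos : 0 < δ := div_pos hT hNpos
  have hδε : δ < ε := by
    rw [hδdef, div_lt_iff₀ hNpos]
    have hN0N : (N0 : ℝ) ≤ (N : ℝ) := by exact_mod_cast le_max_left _ _
    have : T / ε < (N : ℝ) := lt_of_lt_of_le hN0 hN0N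
    rw [div_lt_iff₀ hε] at this
    linarith [this]
  set x : ℕ → ℝ := fun j => (WithBot.unbotD 0 (v.toFun ((j : ℝ) * δ))) with hxdef
  have hgrid : ∀ j : ℕ, 1 ≤ j → j ≤ N - 1 → ((j:ℝ) * δ) ∈ Set.Ioo 0 T := by
    intro j h1 h2
    constructor
    · have : (1:ℝ) ≤ (j:ℝ) := by exact_mod_cast h1
      nlinarith
    · have hj : (j : ℝ) ≤ (N : ℝ) - 1 := by
        have : (j : ℝ) ≤ ((N - 1 : ℕ) : ℝ) := by exact_mod_cast h2
        rwa [Nat.cast_sub (by omega), Nat.cast_one] at this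
      have : (j:ℝ) * δ ≤ ((N:ℝ) - 1) * δ := by nlinarith
      have hNδ : (N:ℝ) * δ = T := by
        rw [hδdef]; field_simp
      nlinarith
  have hx : ∀ j : ℕ, 1 ≤ j → j ≤ N - 1 → v.toFun ((j:ℝ) * δ) = ((x j : ℝ) : WithBot ℝ) := by
    intro j h1 h2
    obtain ⟨y, hy⟩ := v.exists_coe (hgrid j h1 h2)
    rw [hy, hxdef]; simp [hy]
  have hxmono : ∀ a b : ℕ, 1 ≤ a → a ≤ b → b ≤ N - 1 → x a ≤ x b := by
    intro a b h1 hab h2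
    have hcab : (a:ℝ) ≤ (b:ℝ) := by exact_mod_cast hab
    have := v.mono (le_of_lt (hgrid a h1 (le_trans hab h2)).1)
      (by nlinarith [hδpos])
      (hgrid b (le_trans h1 hab) h2).2
    rw [hx a h1 (le_trans hab h2), hx b (le_trans h1 hab) h2, WithBot.coe_le_coe] at this
    exact this
  -- choose rational approximations
  have hchoice : ∀ j : Fin N, ∃ q : ℚ, x ((j:ℕ) ⊔ 1) - ε < (q:ℝ) ∧ (q:ℝ) < x ((j:ℕ) ⊔ 1) :=
    fun j => exists_rat_btwn (by linarith)
  choose q hq1 hq2 using hchoice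
  refine ⟨⟨N, q⟩, le_of_lt hε, ?_⟩
  -- the step function
  have hdp : (densePt hT ⟨N, q⟩).toFun
      = stepFun T (T / ((N:ℕ) : ℝ)) (runMax (fun j => if hj : j < N then q ⟨j, hj⟩ else 0)) := by
    unfold densePt
    rw [dif_pos hN2]
  set G : ℕ → ℚ := runMax (fun j => if hj : j < N then q ⟨j, hj⟩ else 0) with hGdef
  have hf' : ∀ j : ℕ, (hj : j < N) → (fun j => if hj : j < N then q ⟨j, hj⟩ else 0) j = q ⟨j, hj⟩ := by
    intro j hj; simp [hj]
  have hG_le : ∀ i : ℕ, 1 ≤ i → i ≤ N - 1 → ((G i : ℚ) : ℝ) ≤ x i := by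
    intro i h1 h2
    refine runMax_le _ _ _ ?_
    intro j hj
    have hjN : j < N := by omega
    rw [dif_pos hjN]
    have hj1 : 1 ≤ (j ⊔ 1) := le_max_right _ _
    have hji : (j ⊔ 1) ≤ i := sup_le (le_trans hj le_rfl) h1
    calc ((q ⟨j, hjN⟩ : ℚ) : ℝ) ≤ x (((⟨j, hjN⟩ : Fin N) : ℕ) ⊔ 1) := le_of_lt (hq2 _)
      _ = x (j ⊔ 1) := rfl
      _ ≤ x i := hxmono _ _ hj1 hji h2
  have hG_ge : ∀ i : ℕ, 1 ≤ i → i ≤ N - 1 → x i - ε < ((G i : ℚ) : ℝ) := by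
    intro i h1 h2
    have hiN : i < N := by omega
    have h0 := hq1 ⟨i, hiN⟩
    have hfi : ((⟨i, hiN⟩ : Fin N) : ℕ) ⊔ 1 = i := by simp [sup_eq_left.2 h1]
    rw [hfi] at h0
    have := le_runMax (fun j => if hj : j < N then q ⟨j, hj⟩ else 0) i
    rw [dif_pos hiN] at this
    have hcast : ((q ⟨i, hiN⟩ : ℚ) : ℝ) ≤ ((G i : ℚ) : ℝ) := by exact_mod_cast this
    linarith
  -- index facts at a time point u ∈ (0, T)
  have hidx : ∀ u : ℝ, u ∈ Set.Ioo 0 T →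
      1 ≤ stepIdx δ u ∧ stepIdx δ u ≤ N - 1 ∧ ((stepIdx δ u : ℕ) : ℝ) * δ ≤ max u δ ∧
        (1 < ⌈u / δ⌉ → u - δ ≤ ((stepIdx δ u : ℕ) : ℝ) * δ) := by
    intro u hu
    have hceil_pos : (0:ℤ) < ⌈u / δ⌉ := Int.ceil_pos.2 (div_pos hu.1 hδpos)
    have hceil_leN : ⌈u / δ⌉ ≤ (N : ℤ) := by
      refine Int.ceil_le.2 ?_
      rw [div_le_iff₀ hδpos]
      push_cast
      have hNδ : (N:ℝ) * δ = T := by rw [hδdef]; field_simp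
      linarith [hu.2]
    set k : ℕ := ⌈u / δ⌉.toNat with hkdef
    have hk1 : 1 ≤ k := by omega
    have hkN : k ≤ N := by omega
    have hkcast : ((k:ℕ) : ℤ) = ⌈u / δ⌉ := Int.toNat_of_nonneg (le_of_lt hceil_pos)
    have hidx_eq : stepIdx δ u = (k - 1) ⊔ 1 := by unfold stepIdx; rw [← hkdef]
    have hub : u ≤ (k : ℝ) * δ := by
      have h1 := Int.le_ceil (u / δ)
      have : u / δ ≤ (k : ℝ) := by
        rw [show ((k:ℕ):ℝ) = ((⌈u/δ⌉ : ℤ) : ℝ) by exact_mod_cast hkcast]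
        exact h1
      rwa [div_le_iff₀ hδpos] at this
    have hlb : ((k:ℝ) - 1) * δ < u := by
      have h1 : ((⌈u/δ⌉ - 1 : ℤ) : ℝ) < u / δ := Int.lt_ceil.1 (by omega)
      rw [lt_div_iff₀ hδpos] at h1
      have : ((⌈u/δ⌉ - 1 : ℤ) : ℝ) = (k:ℝ) - 1 := by
        push_cast [← hkcast]; ring
      linarith [h1, this ▸ h1]
    refine ⟨?_, ?_, ?_, ?_⟩
    · rw [hidx_eq]; exact le_max_right _ _
    · rw [hidx_eq]; exact sup_le (by omega) (by omega)
    · rw [hidx_eq]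
      have : (((k-1) ⊔ 1 : ℕ) : ℝ) = max ((k:ℝ) - 1) 1 := by
        rw [Nat.cast_max, Nat.cast_sub hk1, Nat.cast_one]
      rw [this]
      rw [max_mul_of_nonneg _ _ (le_of_lt hδpos), one_mul]
      exact max_le_max (le_of_lt hlb) le_rfl
    · intro hk2
      have hk2' : 2 ≤ k := by omega
      have : (k - 1) ⊔ 1 = k - 1 := sup_eq_left.2 (by omega)
      rw [hidx_eq, this]
      have hc : (((k - 1 : ℕ)) : ℝ) = (k:ℝ) - 1 := by
        rw [Nat.cast_sub hk1, Nat.cast_one]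
      rw [hc]
      nlinarith [hub]
  -- now verify the two conditions
  intro t ht
  rw [hdp]
  have hδT : T / ((N:ℕ) : ℝ) = δ := rfl
  rw [hδT]
  obtain ⟨hi1, hiN1, hile, hige⟩ := hidx t ht
  constructor
  · -- v (max (t-ε) 0) - ε ≤ step t
    rcases le_or_gt t ε with htε | htε
    · have h0 : max (t - ε) 0 = 0 := max_eq_right (by linarith)
      have e1 : v.toFun 0 = ⊥ := v.bot' (by simp)
      rw [h0, e1, WithBot.map_bot]; exact bot_le
    · have h0 : max (t - ε) 0 = t - ε := max_eq_left (by linarith)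
      have hk2 : 1 < ⌈t / δ⌉ := by
        refine Int.lt_ceil.2 ?_
        push_cast
        rw [lt_div_iff₀ hδpos]
        nlinarith
      have hge := hige hk2
      have harg : t - ε ≤ ((stepIdx δ t : ℕ) : ℝ) * δ := by linarith
      have hstep : stepFun T δ G t = ((G (stepIdx δ t) : ℚ) : ℝ) := by
        unfold stepFun
        rw [if_pos (by simpa [Set.mem_Ioo] using ht)]
      rw [hstep, h0]
      have hvm : v.toFun (t - ε) ≤ v.toFun (((stepIdx δ t : ℕ) : ℝ) * δ) :=
        v.mono (by linarith) harg (hgrid _ hi1 hiN1).2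
      rw [hx _ hi1 hiN1] at hvm
      have := map_sub_mono ε hvm
      refine le_trans this ?_
      rw [WithBot.map_coe, WithBot.coe_le_coe]
      have := hG_ge _ hi1 hiN1
      linarith
  · -- step (max (t-ε) 0) - ε ≤ v t
    rcases le_or_gt t ε with htε | htε
    · have h0 : max (t - ε) 0 = 0 := max_eq_right (by linarith)
      have e1 : stepFun T δ G 0 = ⊥ := by
        unfold stepFun; rw [if_neg (by simp)]
      rw [h0, e1, WithBot.map_bot]; exact bot_le
    · have h0 : max (t - ε) 0 = t - ε := max_eq_left (by linarith)
      have hsIoo : t - ε ∈ Set.Ioo 0 T := ⟨by linarith, by linarith [ht.2]⟩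
      obtain ⟨hj1, hjN1, hjle, _⟩ := hidx (t - ε) hsIoo
      have hstep : stepFun T δ G (t - ε) = ((G (stepIdx δ (t - ε)) : ℚ) : ℝ) := by
        unfold stepFun
        rw [if_pos (by simpa [Set.mem_Ioo] using hsIoo)]
      rw [h0, hstep]
      have hjt : ((stepIdx δ (t - ε) : ℕ) : ℝ) * δ ≤ t := by
        refine le_trans hjle (max_le (by linarith) (by linarith))
      have h1 : ((G (stepIdx δ (t-ε)) : ℚ) : ℝ) ≤ x (stepIdx δ (t-ε)) := hG_le _ hj1 hjN1
      have h2 : v.toFun (((stepIdx δ (t-ε) : ℕ) : ℝ) * δ) ≤ v.toFun t := by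
        refine v.mono (le_of_lt (hgrid _ hj1 hjN1).1) hjt ht.2
      rw [hx _ hj1 hjN1] at h2
      rw [WithBot.map_coe]
      refine le_trans ?_ h2
      rw [WithBot.coe_le_coe]
      linarith

/-! ### countable basis of balls -/

def ballOf (hT : 0 < T) (i : (Σ n : ℕ, Fin n → ℚ) × ℚ) : Set (VPlus T) :=
  {w | dL T (densePt hT i.1).toFun w.toFun < ((i.2 : ℚ) : ℝ)}

lemma subset_ball_of_close (hT : 0 < T) {c w d : VPlus T} {ρ σ : ℝ}
    (h1 : dL T c.toFun w.toFun + 2*σ ≤ ρ) (h2 : dL T w.toFun d.toFun < σ) :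
    {u : VPlus T | dL T d.toFun u.toFun < σ} ⊆ {u | dL T c.toFun u.toFun < ρ} := by
  intro u hu
  simp only [Set.mem_setOf_eq] at hu ⊢
  have t1 := dL_triangle hT c w u
  have t2 := dL_triangle hT w d u
  linarith

/-- find a countable-family ball between a point and a surrounding ball -/
lemma exists_mid_ball (hT : 0 < T) (w c : VPlus T) {ρ : ℝ}
    (hd : dL T c.toFun w.toFun < ρ) :
    ∃ i : (Σ n : ℕ, Fin n → ℚ) × ℚ, w ∈ ballOf hT i ∧
      ballOf hT i ⊆ {u : VPlus T | dL T c.toFun u.toFun < ρ} := by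
  set η : ℝ := ρ - dL T c.toFun w.toFun with hη
  have hηpos : 0 < η := by rw [hη]; linarith
  obtain ⟨σ, hσ1, hσ2⟩ := exists_rat_btwn (show (0:ℝ) < η/2 by linarith)
  obtain ⟨p, hp⟩ := densePt_dense hT w (show (0:ℝ) < (σ:ℝ)/2 by linarith)
  have hdp : dL T w.toFun (densePt hT p).toFun ≤ (σ:ℝ)/2 := dL_le hp
  have hdp' : dL T w.toFun (densePt hT p).toFun < (σ:ℝ) := lt_of_le_of_lt hdp (by linarith)
  refine ⟨(p, σ), ?_, ?_⟩
  · show dL T (densePt hT p).toFun w.toFun < (σ:ℝ)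
    rwa [dL_comm]
  · exact subset_ball_of_close hT (by linarith) hdp'

lemma exists_ball_subset (hT : 0 < T) {U : Set (VPlus T)} (hU : IsOpen U) :
    ∀ w ∈ U, ∃ i : (Σ n : ℕ, Fin n → ℚ) × ℚ, w ∈ ballOf hT i ∧ ballOf hT i ⊆ U := by
  have hU' : TopologicalSpace.GenerateOpen
      {U : Set (VPlus T) | ∃ v : VPlus T, ∃ ε : ℝ, 0 < ε ∧
        U = {w : VPlus T | dL T v.toFun w.toFun < ε}} U := hU
  clear hU
  induction hU' with
  | basic V hV =>
    obtain ⟨v, ε, hε, rfl⟩ := hV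
    intro w hw
    exact exists_mid_ball hT w v hw
  | univ =>
    intro w _
    obtain ⟨i, hi1, _⟩ := exists_mid_ball hT w w (ρ := 1) (by rw [dL_self hT]; norm_num)
    exact ⟨i, hi1, Set.subset_univ _⟩
  | inter V₁ V₂ h₁ h₂ ih₁ ih₂ =>
    intro w hw
    obtain ⟨i₁, hi₁, hsub₁⟩ := ih₁ w hw.1
    obtain ⟨i₂, hi₂, hsub₂⟩ := ih₂ w hw.2
    set c₁ := densePt hT i₁.1
    set c₂ := densePt hT i₂.1
    have hd₁ : dL T c₁.toFun w.toFun < ((i₁.2 : ℚ) : ℝ) := hi₁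
    have hd₂ : dL T c₂.toFun w.toFun < ((i₂.2 : ℚ) : ℝ) := hi₂
    set η : ℝ := min (((i₁.2 : ℚ) : ℝ) - dL T c₁.toFun w.toFun)
      (((i₂.2 : ℚ) : ℝ) - dL T c₂.toFun w.toFun) with hηdef
    have hηpos : 0 < η := lt_min (by linarith) (by linarith)
    obtain ⟨σ, hσ1, hσ2⟩ := exists_rat_btwn (show (0:ℝ) < η/2 by linarith)
    obtain ⟨p, hp⟩ := densePt_dense hT w (show (0:ℝ) < (σ:ℝ)/2 by linarith)
    have hdp : dL T w.toFun (densePt hT p).toFun < (σ:ℝ) :=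
      lt_of_le_of_lt (dL_le hp) (by linarith)
    refine ⟨(p, σ), ?_, ?_⟩
    · show dL T (densePt hT p).toFun w.toFun < (σ:ℝ)
      rwa [dL_comm]
    · have hs₁ : ballOf hT (p, σ) ⊆ {u : VPlus T | dL T c₁.toFun u.toFun < ((i₁.2 : ℚ) : ℝ)} :=
        subset_ball_of_close hT (by
          have : η ≤ ((i₁.2 : ℚ) : ℝ) - dL T c₁.toFun w.toFun := min_le_left _ _
          linarith) hdp
      have hs₂ : ballOf hT (p, σ) ⊆ {u : VPlus T | dL T c₂.toFun u.toFun < ((i₂.2 : ℚ) : ℝ)} :=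
        subset_ball_of_close hT (by
          have : η ≤ ((i₂.2 : ℚ) : ℝ) - dL T c₂.toFun w.toFun := min_le_right _ _
          linarith) hdp
      intro u hu
      exact ⟨hsub₁ (hs₁ hu), hsub₂ (hs₂ hu)⟩
  | sUnion S hS ih =>
    intro w hw
    obtain ⟨V, hVS, hwV⟩ := hw
    obtain ⟨i, hi, hsub⟩ := ih V hVS w hwV
    exact ⟨i, hi, hsub.trans (Set.subset_sUnion_of_mem hVS)⟩

lemma isOpen_eq_union_balls (hT : 0 < T) {U : Set (VPlus T)} (hU : IsOpen U) :
    U = ⋃ i ∈ {i : (Σ n : ℕ, Fin n → ℚ) × ℚ | ballOf hT i ⊆ U}, ballOf hT i := by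
  apply Set.Subset.antisymm
  · intro w hw
    obtain ⟨i, hi, hsub⟩ := exists_ball_subset hT hU w hw
    exact Set.mem_biUnion hsub hi
  · intro w hw
    obtain ⟨i, hi⟩ := Set.mem_iUnion.1 hw
    obtain ⟨hsub, hmem⟩ := Set.mem_iUnion.1 hi
    exact hsub hmem

/-! ### measurability from evaluations -/

section Meas

variable {Ω : Type*} [MeasurableSpace Ω]

lemma measurableSet_lt_eval {W : Ω → VPlus T}
    (h : ∀ (s : ℝ) (c : ℝ), MeasurableSet {ω | (W ω).toFun s ≤ ((c : ℝ) : WithBot ℝ)})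
    (s : ℝ) (x : ℝ) : MeasurableSet {ω | (W ω).toFun s < ((x : ℝ) : WithBot ℝ)} := by
  have heq : {ω | (W ω).toFun s < ((x : ℝ) : WithBot ℝ)}
      = ⋃ (u : ℚ), ⋃ (_ : (u:ℝ) < x), {ω | (W ω).toFun s ≤ ((u:ℝ) : WithBot ℝ)} := by
    ext ω
    simp only [Set.mem_setOf_eq, Set.mem_iUnion]
    constructor
    · intro hlt
      cases hWs : (W ω).toFun s with
      | bot =>
        obtain ⟨u, hu⟩ := exists_rat_lt x
        exact ⟨u, hu, bot_le⟩
      | coe y =>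
        rw [hWs, WithBot.coe_lt_coe] at hlt
        obtain ⟨u, hu1, hu2⟩ := exists_rat_btwn hlt
        exact ⟨u, hu2, by exact_mod_cast le_of_lt hu1⟩
    · rintro ⟨u, hu, hle⟩
      exact lt_of_le_of_lt hle (by exact_mod_cast hu)
  rw [heq]
  exact MeasurableSet.iUnion fun u => MeasurableSet.iUnion fun _ => h s u

lemma measurable_of_eval (hT : 0 < T) {W : Ω → VPlus T}
    (h : ∀ (s : ℝ) (c : ℝ), MeasurableSet {ω | (W ω).toFun s ≤ ((c : ℝ) : WithBot ℝ)}) :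
    Measurable W := by
  have hball : ∀ (v : VPlus T) (ε : ℝ),
      MeasurableSet {ω | dL T v.toFun (W ω).toFun < ε} := by
    intro v ε
    have heq : {ω | dL T v.toFun (W ω).toFun < ε}
        = ⋃ (q : ℚ), ⋃ (_ : 0 ≤ (q:ℝ) ∧ (q:ℝ) < ε),
            ⋂ (r : ℚ), ⋂ (_ : 0 < (r:ℝ) ∧ (r:ℝ) < T),
              ({ω | condAt v.toFun (W ω).toFun (q:ℝ) (r:ℝ)} ∩
               {ω | condAt (W ω).toFun v.toFun (q:ℝ) (r:ℝ)}) := by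
      ext ω
      simp only [Set.mem_setOf_eq, Set.mem_iUnion, Set.mem_iInter, Set.mem_inter_iff]
      rw [dL_lt_iff_rat hT]
      constructor
      · rintro ⟨q, h1, h2, h3⟩
        exact ⟨q, ⟨h1, h2⟩, fun r hr => h3 r hr.1 hr.2⟩
      · rintro ⟨q, ⟨h1, h2⟩, h3⟩
        exact ⟨q, h1, h2, fun r hr1 hr2 => h3 r ⟨hr1, hr2⟩⟩
    rw [heq]
    refine MeasurableSet.iUnion fun q => MeasurableSet.iUnion fun _ =>
      MeasurableSet.iInter fun r => MeasurableSet.iInter fun hr => ?_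
    refine MeasurableSet.inter ?_ ?_
    · -- constant ≤ W ω r
      unfold condAt
      cases hc : (v.toFun (max ((r:ℝ) - (q:ℝ)) 0)).map (fun x => x - (q:ℝ)) with
      | bot =>
        have : {ω | (⊥ : WithBot ℝ) ≤ (W ω).toFun (r:ℝ)} = Set.univ := by
          ext ω; simp
        rw [this]; exact MeasurableSet.univ
      | coe x =>
        have heq2 : {ω | ((x:ℝ) : WithBot ℝ) ≤ (W ω).toFun (r:ℝ)}
            = {ω | (W ω).toFun (r:ℝ) < ((x:ℝ) : WithBot ℝ)}ᶜ := by
          ext ω; simp [Set.mem_setOf_eq, not_lt]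
        rw [heq2]
        exact (measurableSet_lt_eval h (r:ℝ) x).compl
    · -- W ω (...) - q ≤ v r
      unfold condAt
      obtain ⟨b, hb⟩ := v.exists_coe (⟨hr.1, hr.2⟩ : (r:ℝ) ∈ Set.Ioo 0 T)
      have heq2 : {ω | ((W ω).toFun (max ((r:ℝ) - (q:ℝ)) 0)).map (fun x => x - (q:ℝ)) ≤ v.toFun (r:ℝ)}
          = {ω | (W ω).toFun (max ((r:ℝ) - (q:ℝ)) 0) ≤ ((b + (q:ℝ) : ℝ) : WithBot ℝ)} := by
        ext ω
        rw [Set.mem_setOf_eq, Set.mem_setOf_eq, hb, map_sub_le_coe_iff]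
      rw [heq2]
      exact h _ _
  -- now use the countable basis
  refine measurable_generateFrom ?_
  intro U hU
  have hUopen : IsOpen U := hU
  rw [isOpen_eq_union_balls hT hUopen]
  rw [Set.preimage_iUnion₂]
  refine MeasurableSet.biUnion (Set.to_countable _) ?_
  intro i _
  exact hball (densePt hT i.1) ((i.2 : ℚ) : ℝ)

end Meas

/-! ### left-continuous regularization of a rational-indexed family -/

def ratSet (E : ℚ → WithBot ℝ) (t : ℝ) : Set (WithBot ℝ) :=
  {x | ∃ s : ℚ, 0 < (s:ℝ) ∧ (s:ℝ) < t ∧ x = E s}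

noncomputable def reg (T : ℝ) (E : ℚ → WithBot ℝ) : ℝ → WithBot ℝ := fun t =>
  if 0 < t ∧ t < T then sSup (ratSet E t) else ⊥

lemma ratSet_nonempty (E : ℚ → WithBot ℝ) {t : ℝ} (ht : 0 < t) : (ratSet E t).Nonempty := by
  obtain ⟨s, hs1, hs2⟩ := exists_rat_btwn ht
  exact ⟨E s, s, hs1, hs2, rfl⟩

section Reg

variable {E : ℚ → WithBot ℝ}

/-- `bddAbove` of the rational value set, from an upper bound hypothesis -/
lemma ratSet_bddAbove {t : ℝ} {b : WithBot ℝ}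
    (hb : ∀ s : ℚ, 0 < (s:ℝ) → (s:ℝ) < t → E s ≤ b) : BddAbove (ratSet E t) := by
  refine ⟨b, ?_⟩
  rintro x ⟨s, hs1, hs2, rfl⟩
  exact hb s hs1 hs2

variable {T : ℝ}

lemma reg_of_mem {t : ℝ} (ht : 0 < t ∧ t < T) : reg T E t = sSup (ratSet E t) := if_pos ht

lemma reg_of_not_mem {t : ℝ} (ht : ¬(0 < t ∧ t < T)) : reg T E t = ⊥ := if_neg ht

lemma reg_inVPlus (hT : 0 < T)
    (hub : ∀ t : ℝ, 0 < t → t < T → ∃ b : WithBot ℝ,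
      ∀ s : ℚ, 0 < (s:ℝ) → (s:ℝ) < t → E s ≤ b)
    (hne : ∀ s : ℚ, 0 < (s:ℝ) → (s:ℝ) < T → E s ≠ ⊥) :
    InVPlus T (reg T E) := by
  have hbdd : ∀ t : ℝ, 0 < t → t < T → BddAbove (ratSet E t) := by
    intro t h1 h2
    obtain ⟨b, hb⟩ := hub t h1 h2
    exact ratSet_bddAbove hb
  have hmono : ∀ s t : ℝ, 0 ≤ s → s ≤ t → t < T → reg T E s ≤ reg T E t := by
    intro s t h0 hst htT
    by_cases hs : 0 < s ∧ s < T
    · rw [reg_of_mem hs, reg_of_mem ⟨lt_of_lt_of_le hs.1 hst, htT⟩]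
      refine csSup_le (ratSet_nonempty E hs.1) ?_
      rintro x ⟨r, hr1, hr2, rfl⟩
      exact le_csSup (hbdd t (lt_of_lt_of_le hs.1 hst) htT) ⟨r, hr1, lt_of_lt_of_le hr2 hst, rfl⟩
    · rw [reg_of_not_mem hs]; exact bot_le
  refine ⟨fun t ht => reg_of_not_mem (by simpa [Set.mem_Ioo] using ht), hmono, ?_, ?_⟩
  · intro t ht
    rw [reg_of_mem (by simpa [Set.mem_Ioo] using ht)]
    obtain ⟨s, hs1, hs2⟩ := exists_rat_btwn ht.1
    intro hbot
    have hle : E s ≤ sSup (ratSet E t) := le_csSup (hbdd t ht.1 ht.2) ⟨s, hs1, hs2, rfl⟩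
    rw [hbot] at hle
    exact hne s hs1 (lt_trans hs2 ht.2) (le_bot_iff.1 hle)
  · intro t ht
    constructor
    · rintro y ⟨r, hr, rfl⟩
      exact hmono r t hr.1 (le_of_lt hr.2) ht.2
    · intro b hb
      rw [reg_of_mem (by simpa [Set.mem_Ioo] using ht)]
      refine csSup_le (ratSet_nonempty E ht.1) ?_
      rintro x ⟨s, hs1, hs2, rfl⟩
      set r : ℝ := ((s:ℝ) + t) / 2 with hr
      have hsr : (s:ℝ) < r := by rw [hr]; linarith
      have hrt : r < t := by rw [hr]; linarith
      have hr0 : 0 < r := lt_trans hs1 hsr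
      have hrT : r < T := lt_trans hrt ht.2
      have hEr : E s ≤ reg T E r := by
        rw [reg_of_mem ⟨hr0, hrT⟩]
        exact le_csSup (hbdd r hr0 hrT) ⟨s, hs1, hsr, rfl⟩
      exact le_trans hEr (hb ⟨r, ⟨le_of_lt hr0, hrt⟩, rfl⟩)

lemma reg_le {t : ℝ} (ht : 0 < t ∧ t < T) {b : WithBot ℝ}
    (hb : ∀ s : ℚ, 0 < (s:ℝ) → (s:ℝ) < t → E s ≤ b) : reg T E t ≤ b := by
  rw [reg_of_mem ht]
  refine csSup_le (ratSet_nonempty E ht.1) ?_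
  rintro x ⟨s, hs1, hs2, rfl⟩
  exact hb s hs1 hs2

lemma le_reg {t : ℝ} (ht : 0 < t ∧ t < T) {s : ℚ} (hs1 : 0 < (s:ℝ)) (hs2 : (s:ℝ) < t)
    {b : WithBot ℝ} (hb : ∀ r : ℚ, 0 < (r:ℝ) → (r:ℝ) < t → E r ≤ b) :
    E s ≤ reg T E t := by
  rw [reg_of_mem ht]
  exact le_csSup (ratSet_bddAbove hb) ⟨s, hs1, hs2, rfl⟩

lemma reg_le_iff {t : ℝ} (ht : 0 < t ∧ t < T) {c : WithBot ℝ} {b : WithBot ℝ}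
    (hb : ∀ s : ℚ, 0 < (s:ℝ) → (s:ℝ) < t → E s ≤ b) :
    reg T E t ≤ c ↔ ∀ s : ℚ, 0 < (s:ℝ) → (s:ℝ) < t → E s ≤ c := by
  rw [reg_of_mem ht]
  rw [csSup_le_iff (ratSet_bddAbove hb) (ratSet_nonempty E ht.1)]
  constructor
  · intro h s hs1 hs2; exact h _ ⟨s, hs1, hs2, rfl⟩
  · rintro h x ⟨s, hs1, hs2, rfl⟩; exact h s hs1 hs2

end Reg

/-! ### random elements: evaluation measurability and arctan variables -/

section Stoch

variable {Ω : Type*} [MeasurableSpace Ω]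

lemma VPlus.isOpen_measurableSet {U : Set (VPlus T)} (h : IsOpen U) : MeasurableSet U :=
  MeasurableSpace.measurableSet_generateFrom h

lemma eval_le_measurableSet (hT : 0 < T) {L : Ω → VPlus T} (hL : Measurable L)
    (s : ℝ) (c : ℝ) : MeasurableSet {ω | (L ω).toFun s ≤ ((c:ℝ) : WithBot ℝ)} := by
  have : {ω | (L ω).toFun s ≤ ((c:ℝ) : WithBot ℝ)}
      = L ⁻¹' ({w : VPlus T | ((c:ℝ) : WithBot ℝ) < w.toFun s}ᶜ) := by
    ext ω; simp [Set.mem_setOf_eq, not_lt]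
  rw [this]
  exact hL (VPlus.isOpen_measurableSet (isOpen_eval_gt hT s _)).compl

/-- the bounded real random variable obtained by evaluating at `s` and squashing -/
def Rv (s : ℚ) (L : Ω → VPlus T) (ω : Ω) : ℝ := Real.arctan (WithBot.unbotD 0 ((L ω).toFun (s:ℝ)))

lemma Rv_abs_le (s : ℚ) (L : Ω → VPlus T) (ω : Ω) : |Rv s L ω| ≤ 2 := by
  have h1 := Real.arctan_lt_pi_div_two (WithBot.unbotD 0 ((L ω).toFun (s:ℝ)))
  have h2 := Real.neg_pi_div_two_lt_arctan (WithBot.unbotD 0 ((L ω).toFun (s:ℝ)))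
  have hpi := Real.pi_le_four
  rw [abs_le]; unfold Rv; constructor <;> linarith

lemma Rv_le_2 (s : ℚ) (L : Ω → VPlus T) (ω : Ω) : Rv s L ω ≤ 2 :=
  (abs_le.1 (Rv_abs_le s L ω)).2

lemma neg2_le_Rv (s : ℚ) (L : Ω → VPlus T) (ω : Ω) : -2 ≤ Rv s L ω :=
  (abs_le.1 (Rv_abs_le s L ω)).1

lemma measurable_unbotEval (hT : 0 < T) {L : Ω → VPlus T} (hL : Measurable L) (s : ℝ) :
    Measurable (fun ω => WithBot.unbotD 0 ((L ω).toFun s)) := by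
  by_cases hs : s ∈ Set.Ioo 0 T
  · refine measurable_of_Iic ?_
    intro x
    have : (fun ω => WithBot.unbotD 0 ((L ω).toFun s)) ⁻¹' (Set.Iic x)
        = {ω | (L ω).toFun s ≤ ((x:ℝ) : WithBot ℝ)} := by
      ext ω
      simp only [Set.mem_preimage, Set.mem_Iic, Set.mem_setOf_eq]
      obtain ⟨y, hy⟩ := (L ω).exists_coe hs
      rw [hy]
      simp [WithBot.coe_le_coe]
    rw [this]
    exact eval_le_measurableSet hT hL s x
  · have : (fun ω => WithBot.unbotD 0 ((L ω).toFun s)) = fun _ => (0:ℝ) := by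
      funext ω
      rw [(L ω).bot' hs]
      rfl
    rw [this]
    exact measurable_const

lemma Rv_measurable (hT : 0 < T) {L : Ω → VPlus T} (hL : Measurable L) (s : ℚ) :
    Measurable (Rv s L) :=
  Real.continuous_arctan.measurable.comp (measurable_unbotEval hT hL (s:ℝ))

variable (P : Measure Ω) [IsProbabilityMeasure P]

lemma Z_integrable (hT : 0 < T) {g : ℕ → Ω → VPlus T} (hg : ∀ n, Measurable (g n)) (s : ℚ) :
    Integrable (fun ω => ⨆ n, Rv s (g n) ω) P := by
  refine Integrable.mono' (integrable_const 2)
    ((Measurable.iSup (fun n => Rv_measurable hT (hg n) s)).aestronglyMeasurable) ?_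
  refine ae_of_all _ fun ω => ?_
  rw [Real.norm_eq_abs, abs_le]
  constructor
  · exact le_trans (neg2_le_Rv s (g 0) ω)
      (le_ciSup (f := fun n => Rv s (g n) ω) ⟨2, by rintro y ⟨n, rfl⟩; exact Rv_le_2 s (g n) ω⟩ 0)
  · exact ciSup_le fun n => Rv_le_2 s (g n) ω

lemma Zinf_integrable (hT : 0 < T) {g : ℕ → Ω → VPlus T} (hg : ∀ n, Measurable (g n)) (s : ℚ) :
    Integrable (fun ω => ⨅ n, Rv s (g n) ω) P := by
  refine Integrable.mono' (integrable_const 2)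
    ((Measurable.iInf (fun n => Rv_measurable hT (hg n) s)).aestronglyMeasurable) ?_
  refine ae_of_all _ fun ω => ?_
  rw [Real.norm_eq_abs, abs_le]
  constructor
  · exact le_ciInf fun n => neg2_le_Rv s (g n) ω
  · exact le_trans
      (ciInf_le (f := fun n => Rv s (g n) ω) ⟨-2, by rintro y ⟨n, rfl⟩; exact neg2_le_Rv s (g n) ω⟩ 0)
      (Rv_le_2 s (g 0) ω)

lemma bddAbove_Rv_range (s : ℚ) (g : ℕ → Ω → VPlus T) (ω : Ω) :
    BddAbove (Set.range fun n => Rv s (g n) ω) :=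
  ⟨2, by rintro y ⟨n, rfl⟩; exact Rv_le_2 s (g n) ω⟩

lemma bddBelow_Rv_range (s : ℚ) (g : ℕ → Ω → VPlus T) (ω : Ω) :
    BddBelow (Set.range fun n => Rv s (g n) ω) :=
  ⟨-2, by rintro y ⟨n, rfl⟩; exact neg2_le_Rv s (g n) ω⟩

/-- key selection lemma: a single sequence from `Γ` whose pointwise sup dominates,
 in the a.e. sense, every member of `Γ` at every rational time. -/
lemma exists_seq_sup (hT : 0 < T) (Γ : Set (Ω → VPlus T))
    (hme : ∀ L ∈ Γ, Measurable L) (hne : Γ.Nonempty) :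
    ∃ f : ℕ → (Ω → VPlus T), (∀ n, f n ∈ Γ) ∧
      ∀ s : ℚ, ∀ L ∈ Γ, ∀ᵐ ω ∂P, Rv s L ω ≤ ⨆ n, Rv s (f n) ω := by
  classical
  obtain ⟨L₀, hL₀⟩ := hne
  -- the target values
  set IS : ℚ → Set ℝ := fun s =>
    {y | ∃ g : ℕ → (Ω → VPlus T), (∀ n, g n ∈ Γ) ∧ y = ∫ ω, (⨆ n, Rv s (g n) ω) ∂P} with hIS
  have hISne : ∀ s, (IS s).Nonempty := fun s => ⟨_, fun _ => L₀, fun _ => hL₀, rfl⟩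
  have hISbdd : ∀ s, BddAbove (IS s) := by
    intro s
    refine ⟨2, ?_⟩
    rintro y ⟨g, hg, rfl⟩
    calc ∫ ω, (⨆ n, Rv s (g n) ω) ∂P ≤ ∫ _ω, (2:ℝ) ∂P := by
          exact integral_mono (Z_integrable P hT (fun n => hme _ (hg n)) s) (integrable_const 2)
            (fun ω => ciSup_le fun n => Rv_le_2 s (g n) ω)
      _ = 2 := by simp [measure_univ]
  set ms : ℚ → ℝ := fun s => sSup (IS s) with hms
  -- choose approximating sequences
  have hchoice : ∀ p : ℚ × ℕ, ∃ g : ℕ → (Ω → VPlus T), (∀ n, g n ∈ Γ) ∧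
      ms p.1 - 1/(p.2+1) < ∫ ω, (⨆ n, Rv p.1 (g n) ω) ∂P := by
    rintro ⟨s, k⟩
    have hlt : ms s - 1/(k+1) < ms s := by
      have : (0:ℝ) < 1/((k:ℝ)+1) := by positivity
      linarith
    obtain ⟨y, hy, hylt⟩ := exists_lt_of_lt_csSup (hISne s) hlt
    obtain ⟨g, hg, rfl⟩ := hy
    exact ⟨g, hg, hylt⟩
  choose gs hgs1 hgs2 using hchoice
  -- combine into one sequence
  obtain ⟨e, he⟩ := exists_surjective_nat (ℚ × ℕ × ℕ)
  set f : ℕ → (Ω → VPlus T) := fun n => gs ((e n).1, (e n).2.1) ((e n).2.2) with hf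
  have hfΓ : ∀ n, f n ∈ Γ := fun n => hgs1 _ _
  refine ⟨f, hfΓ, ?_⟩
  intro s L hL
  have hfme : ∀ n, Measurable (f n) := fun n => hme _ (hfΓ n)
  -- ∫ Z s f = ms s
  have hle : ∫ ω, (⨆ n, Rv s (f n) ω) ∂P ≤ ms s :=
    le_csSup (hISbdd s) ⟨f, hfΓ, rfl⟩
  have hge : ms s ≤ ∫ ω, (⨆ n, Rv s (f n) ω) ∂P := by
    have hk : ∀ k : ℕ, ms s - 1/(k+1) ≤ ∫ ω, (⨆ n, Rv s (f n) ω) ∂P := by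
      intro k
      refine le_trans (le_of_lt (hgs2 (s, k))) ?_
      refine integral_mono (Z_integrable P hT (fun n => hme _ (hgs1 (s,k) n)) s)
        (Z_integrable P hT hfme s) ?_
      intro ω
      refine ciSup_le fun j => ?_
      obtain ⟨n, hn⟩ := he (s, k, j)
      have : gs (s, k) j = f n := by rw [hf]; simp [hn]
      rw [this]
      exact le_ciSup (bddAbove_Rv_range s f ω) n
    by_contra hcon
    push_neg at hcon
    obtain ⟨k, hk'⟩ := exists_nat_one_div_lt (show (0:ℝ) < ms s - ∫ ω, (⨆ n, Rv s (f n) ω) ∂P by linarith)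
    have := hk k
    linarith
  have hZf : ∫ ω, (⨆ n, Rv s (f n) ω) ∂P = ms s := le_antisymm hle hge
  -- augmented sequence
  set g' : ℕ → (Ω → VPlus T) := fun n => Nat.casesOn n L f with hg'
  have hg'Γ : ∀ n, g' n ∈ Γ := by
    intro n; cases n with
    | zero => exact hL
    | succ m => exact hfΓ m
  have hg'me : ∀ n, Measurable (g' n) := fun n => hme _ (hg'Γ n)
  have hZg'_le : ∫ ω, (⨆ n, Rv s (g' n) ω) ∂P ≤ ms s := le_csSup (hISbdd s) ⟨g', hg'Γ, rfl⟩
  have hptw : ∀ ω, (⨆ n, Rv s (f n) ω) ≤ ⨆ n, Rv s (g' n) ω := by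
    intro ω
    refine ciSup_le fun j => ?_
    have : Rv s (f j) ω = Rv s (g' (j+1)) ω := rfl
    rw [this]
    exact le_ciSup (bddAbove_Rv_range s g' ω) (j+1)
  -- difference is a.e. zero
  have hint1 := Z_integrable P hT hg'me s
  have hint2 := Z_integrable P hT hfme s
  have hD : ∫ ω, ((⨆ n, Rv s (g' n) ω) - (⨆ n, Rv s (f n) ω)) ∂P = 0 := by
    rw [integral_sub hint1 hint2]
    have h1 : ∫ ω, (⨆ n, Rv s (g' n) ω) ∂P ≥ ∫ ω, (⨆ n, Rv s (f n) ω) ∂P :=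
      integral_mono hint2 hint1 hptw
    have h2 : ∫ ω, (⨆ n, Rv s (g' n) ω) ∂P ≤ ms s := hZg'_le
    rw [hZf] at h1
    linarith [h1, h2, hZf]
  have hae := (integral_eq_zero_iff_of_nonneg_ae
    (ae_of_all _ fun ω => by simp [sub_nonneg]; exact hptw ω)
    (hint1.sub hint2)).1 hD
  filter_upwards [hae] with ω hω
  have heq : (⨆ n, Rv s (g' n) ω) = ⨆ n, Rv s (f n) ω := by
    have := hω
    simp only [Pi.zero_apply] at this
    linarith [this, sub_eq_zero.1 this]
  calc Rv s L ω = Rv s (g' 0) ω := rfl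
    _ ≤ ⨆ n, Rv s (g' n) ω := le_ciSup (bddAbove_Rv_range s g' ω) 0
    _ = ⨆ n, Rv s (f n) ω := heq

lemma exists_seq_inf (hT : 0 < T) (Γ : Set (Ω → VPlus T))
    (hme : ∀ L ∈ Γ, Measurable L) (hne : Γ.Nonempty) :
    ∃ f : ℕ → (Ω → VPlus T), (∀ n, f n ∈ Γ) ∧
      ∀ s : ℚ, ∀ L ∈ Γ, ∀ᵐ ω ∂P, (⨅ n, Rv s (f n) ω) ≤ Rv s L ω := by
  classical
  obtain ⟨L₀, hL₀⟩ := hne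
  set IS : ℚ → Set ℝ := fun s =>
    {y | ∃ g : ℕ → (Ω → VPlus T), (∀ n, g n ∈ Γ) ∧ y = ∫ ω, (⨅ n, Rv s (g n) ω) ∂P} with hIS
  have hISne : ∀ s, (IS s).Nonempty := fun s => ⟨_, fun _ => L₀, fun _ => hL₀, rfl⟩
  have hISbdd : ∀ s, BddBelow (IS s) := by
    intro s
    refine ⟨-2, ?_⟩
    rintro y ⟨g, hg, rfl⟩
    calc (-2:ℝ) = ∫ _ω, (-2:ℝ) ∂P := by simp [measure_univ]
      _ ≤ ∫ ω, (⨅ n, Rv s (g n) ω) ∂P := by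
          exact integral_mono (integrable_const (-2)) (Zinf_integrable P hT (fun n => hme _ (hg n)) s)
            (fun ω => le_ciInf fun n => neg2_le_Rv s (g n) ω)
  set ms : ℚ → ℝ := fun s => sInf (IS s) with hms
  have hchoice : ∀ p : ℚ × ℕ, ∃ g : ℕ → (Ω → VPlus T), (∀ n, g n ∈ Γ) ∧
      ∫ ω, (⨅ n, Rv p.1 (g n) ω) ∂P < ms p.1 + 1/(p.2+1) := by
    rintro ⟨s, k⟩
    have hlt : ms s < ms s + 1/(k+1) := by
      have : (0:ℝ) < 1/((k:ℝ)+1) := by positivity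
      linarith
    obtain ⟨y, hy, hylt⟩ := exists_lt_of_csInf_lt (hISne s) hlt
    obtain ⟨g, hg, rfl⟩ := hy
    exact ⟨g, hg, hylt⟩
  choose gs hgs1 hgs2 using hchoice
  obtain ⟨e, he⟩ := exists_surjective_nat (ℚ × ℕ × ℕ)
  set f : ℕ → (Ω → VPlus T) := fun n => gs ((e n).1, (e n).2.1) ((e n).2.2) with hf
  have hfΓ : ∀ n, f n ∈ Γ := fun n => hgs1 _ _
  refine ⟨f, hfΓ, ?_⟩
  intro s L hL
  have hfme : ∀ n, Measurable (f n) := fun n => hme _ (hfΓ n)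
  have hge : ms s ≤ ∫ ω, (⨅ n, Rv s (f n) ω) ∂P := csInf_le (hISbdd s) ⟨f, hfΓ, rfl⟩
  have hle : ∫ ω, (⨅ n, Rv s (f n) ω) ∂P ≤ ms s := by
    have hk : ∀ k : ℕ, ∫ ω, (⨅ n, Rv s (f n) ω) ∂P ≤ ms s + 1/(k+1) := by
      intro k
      refine le_trans ?_ (le_of_lt (hgs2 (s, k)))
      refine integral_mono (Zinf_integrable P hT hfme s)
        (Zinf_integrable P hT (fun n => hme _ (hgs1 (s,k) n)) s) ?_
      intro ω
      refine le_ciInf fun j => ?_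
      obtain ⟨n, hn⟩ := he (s, k, j)
      have heq : gs (s, k) j = f n := by rw [hf]; simp [hn]
      rw [heq]
      exact ciInf_le (bddBelow_Rv_range s f ω) n
    by_contra hcon
    push_neg at hcon
    obtain ⟨k, hk'⟩ := exists_nat_one_div_lt (show (0:ℝ) < (∫ ω, (⨅ n, Rv s (f n) ω) ∂P) - ms s by linarith)
    have := hk k
    linarith
  have hZf : ∫ ω, (⨅ n, Rv s (f n) ω) ∂P = ms s := le_antisymm hle hge
  set g' : ℕ → (Ω → VPlus T) := fun n => Nat.casesOn n L f with hg'
  have hg'Γ : ∀ n, g' n ∈ Γ := by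
    intro n; cases n with
    | zero => exact hL
    | succ m => exact hfΓ m
  have hg'me : ∀ n, Measurable (g' n) := fun n => hme _ (hg'Γ n)
  have hZg'_ge : ms s ≤ ∫ ω, (⨅ n, Rv s (g' n) ω) ∂P := csInf_le (hISbdd s) ⟨g', hg'Γ, rfl⟩
  have hptw : ∀ ω, (⨅ n, Rv s (g' n) ω) ≤ ⨅ n, Rv s (f n) ω := by
    intro ω
    refine le_ciInf fun j => ?_
    have : Rv s (f j) ω = Rv s (g' (j+1)) ω := rfl
    rw [this]
    exact ciInf_le (bddBelow_Rv_range s g' ω) (j+1)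
  have hint1 := Zinf_integrable P hT hfme s
  have hint2 := Zinf_integrable P hT hg'me s
  have hD : ∫ ω, ((⨅ n, Rv s (f n) ω) - (⨅ n, Rv s (g' n) ω)) ∂P = 0 := by
    rw [integral_sub hint1 hint2]
    have h1 : ∫ ω, (⨅ n, Rv s (g' n) ω) ∂P ≤ ∫ ω, (⨅ n, Rv s (f n) ω) ∂P :=
      integral_mono hint2 hint1 hptw
    linarith [hZg'_ge, hZf, h1]
  have hae := (integral_eq_zero_iff_of_nonneg_ae
    (ae_of_all _ fun ω => by simp [sub_nonneg]; exact hptw ω)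
    (hint1.sub hint2)).1 hD
  filter_upwards [hae] with ω hω
  have heq : (⨅ n, Rv s (f n) ω) = ⨅ n, Rv s (g' n) ω := by
    simp only [Pi.zero_apply] at hω
    linarith [sub_eq_zero.1 hω]
  calc (⨅ n, Rv s (f n) ω) = ⨅ n, Rv s (g' n) ω := heq
    _ ≤ Rv s (g' 0) ω := ciInf_le (bddBelow_Rv_range s g' ω) 0
    _ = Rv s L ω := rfl

end Stoch

/-! ### the order and the lattice -/


section Assembly

variable {Ω : Type*} [MeasurableSpace Ω]

lemma lel_trans {P : Measure Ω} {A B C : Ω → VPlus T}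
    (h1 : lel T P A B) (h2 : lel T P B C) : lel T P A C := by
  intro t h0 hT'
  filter_upwards [h1 t h0 hT', h2 t h0 hT'] with ω ha hb using le_trans ha hb

lemma VPlus.coe_unbot (v : VPlus T) {t : ℝ} (h : t ∈ Set.Ioo 0 T) :
    v.toFun t = ((WithBot.unbotD 0 (v.toFun t) : ℝ) : WithBot ℝ) := by
  obtain ⟨x, hx⟩ := v.exists_coe h
  rw [hx]; rfl

lemma coe_le_coe_of_forall_pos {x y : ℝ} (h : ∀ ε : ℝ, 0 < ε → x ≤ y + ε) : x ≤ y :=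
  le_of_forall_pos_le_add h

/-- the LUB construction -/
lemma exists_lub (hT : 0 < T) (P : Measure Ω) [IsProbabilityMeasure P]
    (Lm Lp : Ω → VPlus T) (hLm : Measurable Lm) (hLp : Measurable Lp)
    (hLmLp : lel T P Lm Lp)
    (Γ : Set (Ω → VPlus T)) (hΓmem : ∀ L ∈ Γ, MemL0 T P Lm Lp L)
    (hΓne : Γ.Nonempty) :
    ∃ Lbar : Ω → VPlus T, MemL0 T P Lm Lp Lbar ∧
      (∀ L ∈ Γ, lel T P L Lbar) ∧
      (∀ M : Ω → VPlus T, MemL0 T P Lm Lp M → (∀ L ∈ Γ, lel T P L M) →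
        lel T P Lbar M) := by
  classical
  obtain ⟨f, hfΓ, hsel⟩ := exists_seq_sup P hT Γ (fun L hL => (hΓmem L hL).1) hΓne
  set Ebar : Ω → ℚ → WithBot ℝ := fun ω s =>
    sSup (Set.range (fun n => min ((f n ω).toFun (s:ℝ)) ((Lp ω).toFun (s:ℝ)))) with hEbar
  -- sure upper bound for Ebar
  have hEb_le : ∀ ω, ∀ s : ℚ, ∀ u : ℝ, 0 < (s:ℝ) → (s:ℝ) ≤ u → u < T →
      Ebar ω s ≤ (Lp ω).toFun u := by
    intro ω s u hs hsu huT
    refine csSup_le (Set.range_nonempty _) ?_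
    rintro x ⟨n, rfl⟩
    exact le_trans (min_le_right _ _) ((Lp ω).mono (le_of_lt hs) hsu huT)
  have hEb_ne : ∀ ω, ∀ s : ℚ, 0 < (s:ℝ) → (s:ℝ) < T → Ebar ω s ≠ ⊥ := by
    intro ω s hs hsT hbot
    have hmem : min ((f 0 ω).toFun (s:ℝ)) ((Lp ω).toFun (s:ℝ)) ≤ Ebar ω s := by
      refine le_csSup ⟨(Lp ω).toFun (s:ℝ), ?_⟩ ⟨0, rfl⟩
      rintro x ⟨n, rfl⟩
      exact min_le_right _ _
    rw [hbot, le_bot_iff] at hmem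
    exact min_ne_bot ((f 0 ω).ne_bot ⟨hs, hsT⟩) ((Lp ω).ne_bot ⟨hs, hsT⟩) hmem
  have hreg : ∀ ω, InVPlus T (reg T (Ebar ω)) := by
    intro ω
    refine reg_inVPlus hT ?_ (hEb_ne ω)
    intro t h1 h2
    exact ⟨(Lp ω).toFun t, fun s hs1 hs2 => hEb_le ω s t hs1 (le_of_lt hs2) h2⟩
  set Lbar : Ω → VPlus T := fun ω => ⟨reg T (Ebar ω), hreg ω⟩ with hLbar
  -- bound needed for `le_reg` and `reg_le_iff`
  have hEbnd : ∀ ω, ∀ t : ℝ, 0 < t → t < T →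
      ∀ s : ℚ, 0 < (s:ℝ) → (s:ℝ) < t → Ebar ω s ≤ (Lp ω).toFun t :=
    fun ω t h1 h2 s hs1 hs2 => hEb_le ω s t hs1 (le_of_lt hs2) h2
  -- (1) measurability
  have hmeas : Measurable Lbar := by
    refine measurable_of_eval hT ?_
    intro s c
    by_cases hs : 0 < s ∧ s < T
    · have heq : {ω | (Lbar ω).toFun s ≤ ((c:ℝ) : WithBot ℝ)}
          = ⋂ (r : ℚ), ⋂ (_ : 0 < (r:ℝ) ∧ (r:ℝ) < s), ⋂ (n : ℕ),
              ({ω | (f n ω).toFun (r:ℝ) ≤ ((c:ℝ) : WithBot ℝ)} ∪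
               {ω | (Lp ω).toFun (r:ℝ) ≤ ((c:ℝ) : WithBot ℝ)}) := by
        ext ω
        simp only [Set.mem_setOf_eq, Set.mem_iInter, Set.mem_union]
        rw [reg_le_iff (E := Ebar ω) hs (hEbnd ω s hs.1 hs.2)]
        constructor
        · intro h r hr n
          have h2 := h r hr.1 hr.2
          have h3 : min ((f n ω).toFun (r:ℝ)) ((Lp ω).toFun (r:ℝ)) ≤ ((c:ℝ) : WithBot ℝ) := by
            refine le_trans ?_ h2
            refine le_csSup ⟨(Lp ω).toFun (r:ℝ), ?_⟩ ⟨n, rfl⟩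
            rintro x ⟨m, rfl⟩; exact min_le_right _ _
          exact min_le_iff.1 h3
        · intro h r hr1 hr2
          refine csSup_le (Set.range_nonempty _) ?_
          rintro x ⟨n, rfl⟩
          rcases h r ⟨hr1, hr2⟩ n with h' | h'
          · exact le_trans (min_le_left _ _) h'
          · exact le_trans (min_le_right _ _) h'
      rw [heq]
      refine MeasurableSet.iInter fun r => MeasurableSet.iInter fun hr => MeasurableSet.iInter fun n => ?_
      exact (eval_le_measurableSet hT (hΓmem _ (hfΓ n)).1 _ c).union (eval_le_measurableSet hT hLp _ c)
    · have heq : {ω | (Lbar ω).toFun s ≤ ((c:ℝ) : WithBot ℝ)} = Set.univ := by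
        ext ω
        simp only [Set.mem_setOf_eq, Set.mem_univ, iff_true]
        rw [show (Lbar ω).toFun s = ⊥ from reg_of_not_mem hs]
        exact bot_le
      rw [heq]; exact MeasurableSet.univ
  -- (2) upper bound
  have hub : ∀ L ∈ Γ, lel T P L Lbar := by
    intro L hL t h0 htT
    rcases eq_or_lt_of_le h0 with h0' | h0'
    · refine ae_of_all _ fun ω => ?_
      rw [(L ω).bot' (by rw [← h0']; simp)]
      exact bot_le
    · -- collect a.e. facts for every rational s
      have hae : ∀ᵐ ω ∂P, ∀ s : ℚ, 0 < (s:ℝ) → (s:ℝ) < t →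
          (Rv s L ω ≤ ⨆ n, Rv s (f n) ω) ∧ ∀ n, (f n ω).toFun (s:ℝ) ≤ (Lp ω).toFun (s:ℝ) := by
        rw [ae_all_iff]
        intro s
        by_cases hst : 0 < (s:ℝ) ∧ (s:ℝ) < t
        · have h1 := hsel s L hL
          have h2 : ∀ᵐ ω ∂P, ∀ n, (f n ω).toFun (s:ℝ) ≤ (Lp ω).toFun (s:ℝ) := by
            rw [ae_all_iff]
            intro n
            exact (hΓmem _ (hfΓ n)).2.2 (s:ℝ) (le_of_lt hst.1) (lt_trans hst.2 htT)
          filter_upwards [h1, h2] with ω hω1 hω2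
          exact fun _ _ => ⟨hω1, hω2⟩
        · refine ae_of_all _ fun ω hs1 hs2 => absurd ⟨hs1, hs2⟩ hst
      filter_upwards [hae] with ω hω
      -- pointwise: L ω t ≤ Lbar ω t
      refine (L ω).le_of_rat ⟨h0', htT⟩ ?_
      intro r hr1 hr2
      obtain ⟨harc, hdom⟩ := hω r hr1 hr2
      have hrT : (r:ℝ) < T := lt_trans hr2 htT
      have hrIoo : (r:ℝ) ∈ Set.Ioo 0 T := ⟨hr1, hrT⟩
      -- real values
      set xL : ℝ := WithBot.unbotD 0 ((L ω).toFun (r:ℝ)) with hxL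
      set xn : ℕ → ℝ := fun n => WithBot.unbotD 0 ((f n ω).toFun (r:ℝ)) with hxn
      set p : ℝ := WithBot.unbotD 0 ((Lp ω).toFun (r:ℝ)) with hp
      have hLcoe := (L ω).coe_unbot hrIoo
      have hfcoe : ∀ n, (f n ω).toFun (r:ℝ) = ((xn n : ℝ) : WithBot ℝ) :=
        fun n => (f n ω).coe_unbot hrIoo
      have hpcoe := (Lp ω).coe_unbot hrIoo
      have hxnp : ∀ n, xn n ≤ p := by
        intro n
        have := hdom n
        rw [hfcoe n, hpcoe, WithBot.coe_le_coe] at this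
        exact this
      have hbddxn : BddAbove (Set.range xn) := ⟨p, by rintro y ⟨n, rfl⟩; exact hxnp n⟩
      -- xL ≤ ⨆ xn
      have harc2 : Real.arctan xL ≤ Real.arctan (⨆ n, xn n) := by
        have hmap : Real.arctan (⨆ n, xn n) = ⨆ n, Real.arctan (xn n) :=
          Real.arctan_strictMono.monotone.map_ciSup_of_continuousAt
            (Real.continuous_arctan.continuousAt) hbddxn
        rw [hmap]
        exact harc
      have hxLsup : xL ≤ ⨆ n, xn n := Real.arctan_strictMono.le_iff_le.1 harc2
      -- conclude in WithBot, with an ε of room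
      obtain ⟨y, hy⟩ := (Lbar ω).exists_coe ⟨h0', htT⟩
      have hled : ∀ ε : ℝ, 0 < ε → xL ≤ y + ε := by
        intro ε hε
        have hlt : xL - ε < ⨆ n, xn n := by linarith
        obtain ⟨n, hn⟩ := exists_lt_of_lt_ciSup hlt
        have hmin : min ((f n ω).toFun (r:ℝ)) ((Lp ω).toFun (r:ℝ)) = ((xn n : ℝ) : WithBot ℝ) := by
          rw [min_eq_left (hdom n), hfcoe n]
        have hEle : ((xn n : ℝ) : WithBot ℝ) ≤ Ebar ω r := by
          rw [← hmin]
          refine le_csSup ⟨(Lp ω).toFun (r:ℝ), ?_⟩ ⟨n, rfl⟩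
          rintro x ⟨m, rfl⟩; exact min_le_right _ _
        have hEreg : Ebar ω r ≤ (Lbar ω).toFun t :=
          le_reg ⟨h0', htT⟩ hr1 hr2 (hEbnd ω t h0' htT)
        have := le_trans hEle hEreg
        rw [hy, WithBot.coe_le_coe] at this
        linarith
      have hxLy : xL ≤ y := coe_le_coe_of_forall_pos hled
      show (L ω).toFun (r:ℝ) ≤ (Lbar ω).toFun t
      rw [hLcoe, hy, WithBot.coe_le_coe]
      exact hxLy
  -- (3) MemL0
  have hmem0 : MemL0 T P Lm Lp Lbar := by
    refine ⟨hmeas, ?_, ?_⟩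
    · exact lel_trans (hΓmem _ (hfΓ 0)).2.1 (hub _ (hfΓ 0))
    · intro t h0 htT
      refine ae_of_all _ fun ω => ?_
      rcases eq_or_lt_of_le h0 with h0' | h0'
      · rw [show (Lbar ω).toFun t = ⊥ from reg_of_not_mem (by rw [← h0']; simp)]
        exact bot_le
      · exact reg_le ⟨h0', htT⟩ (hEbnd ω t h0' htT)
  refine ⟨Lbar, hmem0, hub, ?_⟩
  -- (4) least upper bound
  intro M hM hMub t h0 htT
  rcases eq_or_lt_of_le h0 with h0' | h0'
  · refine ae_of_all _ fun ω => ?_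
    rw [show (Lbar ω).toFun t = ⊥ from reg_of_not_mem (by rw [← h0']; simp)]
    exact bot_le
  · have hae : ∀ᵐ ω ∂P, ∀ s : ℚ, 0 < (s:ℝ) → (s:ℝ) < t →
        ∀ n, (f n ω).toFun (s:ℝ) ≤ (M ω).toFun (s:ℝ) := by
      rw [ae_all_iff]
      intro s
      by_cases hst : 0 < (s:ℝ) ∧ (s:ℝ) < t
      · have h2 : ∀ᵐ ω ∂P, ∀ n, (f n ω).toFun (s:ℝ) ≤ (M ω).toFun (s:ℝ) := by
          rw [ae_all_iff]
          intro n
          exact hMub _ (hfΓ n) (s:ℝ) (le_of_lt hst.1) (lt_trans hst.2 htT)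
        filter_upwards [h2] with ω hω
        exact fun _ _ => hω
      · refine ae_of_all _ fun ω hs1 hs2 => absurd ⟨hs1, hs2⟩ hst
    filter_upwards [hae] with ω hω
    refine reg_le ⟨h0', htT⟩ ?_
    intro s hs1 hs2
    refine csSup_le (Set.range_nonempty _) ?_
    rintro x ⟨n, rfl⟩
    refine le_trans (min_le_left _ _) (le_trans (hω s hs1 hs2 n) ?_)
    exact (M ω).mono (le_of_lt hs1) (le_of_lt hs2) htT

/-- the GLB construction -/
lemma exists_glb (hT : 0 < T) (P : Measure Ω) [IsProbabilityMeasure P]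
    (Lm Lp : Ω → VPlus T) (hLm : Measurable Lm) (hLp : Measurable Lp)
    (hLmLp : lel T P Lm Lp)
    (Γ : Set (Ω → VPlus T)) (hΓmem : ∀ L ∈ Γ, MemL0 T P Lm Lp L)
    (hΓne : Γ.Nonempty) :
    ∃ Lund : Ω → VPlus T, MemL0 T P Lm Lp Lund ∧
      (∀ L ∈ Γ, lel T P Lund L) ∧
      (∀ M : Ω → VPlus T, MemL0 T P Lm Lp M → (∀ L ∈ Γ, lel T P M L) →
        lel T P M Lund) := by
  classical
  obtain ⟨g, hgΓ, hsel⟩ := exists_seq_inf P hT Γ (fun L hL => (hΓmem L hL).1) hΓne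
  set Eund : Ω → ℚ → WithBot ℝ := fun ω s =>
    sInf (Set.range (fun n => max ((g n ω).toFun (s:ℝ)) ((Lm ω).toFun (s:ℝ)))) with hEund
  have hEu_ge : ∀ ω, ∀ s : ℚ, (((Lm ω).toFun (s:ℝ))) ≤ Eund ω s := by
    intro ω s
    refine le_csInf (Set.range_nonempty _) ?_
    rintro x ⟨n, rfl⟩
    exact le_max_right _ _
  have hEu_le0 : ∀ ω, ∀ s : ℚ,
      Eund ω s ≤ max ((g 0 ω).toFun (s:ℝ)) ((Lm ω).toFun (s:ℝ)) :=
    fun ω s => csInf_le (OrderBot.bddBelow _) ⟨0, rfl⟩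
  have hEu_le : ∀ ω, ∀ s : ℚ, ∀ u : ℝ, 0 < (s:ℝ) → (s:ℝ) ≤ u → u < T →
      Eund ω s ≤ max ((g 0 ω).toFun u) ((Lm ω).toFun u) := by
    intro ω s u hs hsu huT
    refine le_trans (hEu_le0 ω s) ?_
    exact max_le_max ((g 0 ω).mono (le_of_lt hs) hsu huT) ((Lm ω).mono (le_of_lt hs) hsu huT)
  have hEu_ne : ∀ ω, ∀ s : ℚ, 0 < (s:ℝ) → (s:ℝ) < T → Eund ω s ≠ ⊥ := by
    intro ω s hs hsT hbot
    have := hEu_ge ω s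
    rw [hbot, le_bot_iff] at this
    exact (Lm ω).ne_bot ⟨hs, hsT⟩ this
  have hreg : ∀ ω, InVPlus T (reg T (Eund ω)) := by
    intro ω
    refine reg_inVPlus hT ?_ (hEu_ne ω)
    intro t h1 h2
    exact ⟨max ((g 0 ω).toFun t) ((Lm ω).toFun t),
      fun s hs1 hs2 => hEu_le ω s t hs1 (le_of_lt hs2) h2⟩
  set Lund : Ω → VPlus T := fun ω => ⟨reg T (Eund ω), hreg ω⟩ with hLund
  have hEbnd : ∀ ω, ∀ t : ℝ, 0 < t → t < T →
      ∀ s : ℚ, 0 < (s:ℝ) → (s:ℝ) < t → Eund ω s ≤ max ((g 0 ω).toFun t) ((Lm ω).toFun t) :=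
    fun ω t h1 h2 s hs1 hs2 => hEu_le ω s t hs1 (le_of_lt hs2) h2
  -- measurability
  have hmeas : Measurable Lund := by
    refine measurable_of_eval hT ?_
    intro s c
    by_cases hs : 0 < s ∧ s < T
    · have hinner : ∀ ω, ∀ r : ℚ, (Eund ω r ≤ ((c:ℝ) : WithBot ℝ) ↔
          ∀ u : ℚ, c < (u:ℝ) → ∃ n, (g n ω).toFun (r:ℝ) ≤ ((u:ℝ) : WithBot ℝ) ∧
            (Lm ω).toFun (r:ℝ) ≤ ((u:ℝ) : WithBot ℝ)) := by
        intro ω r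
        constructor
        · intro h u hu
          have hlt : Eund ω r < ((u:ℝ) : WithBot ℝ) :=
            lt_of_le_of_lt h (by exact_mod_cast WithBot.coe_lt_coe.2 hu)
          obtain ⟨x, hx, hxlt⟩ := exists_lt_of_csInf_lt' (Set.range_nonempty _) hlt
          obtain ⟨n, rfl⟩ := hx
          rw [max_lt_iff] at hxlt
          exact ⟨n, le_of_lt hxlt.1, le_of_lt hxlt.2⟩
        · intro h
          by_contra hcon
          rw [not_le] at hcon
          cases hE : Eund ω r with
          | bot => rw [hE] at hcon; exact not_lt_bot hcon
          | coe z =>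
            rw [hE, WithBot.coe_lt_coe] at hcon
            obtain ⟨u, hu1, hu2⟩ := exists_rat_btwn hcon
            obtain ⟨n, hn1, hn2⟩ := h u hu1
            have hle : Eund ω r ≤ max ((g n ω).toFun (r:ℝ)) ((Lm ω).toFun (r:ℝ)) :=
              csInf_le (OrderBot.bddBelow _) ⟨n, rfl⟩
            rw [hE] at hle
            have : ((z:ℝ) : WithBot ℝ) ≤ ((u:ℝ) : WithBot ℝ) :=
              le_trans hle (max_le hn1 hn2)
            rw [WithBot.coe_le_coe] at this
            linarith
      have heq : {ω | (Lund ω).toFun s ≤ ((c:ℝ) : WithBot ℝ)}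
          = ⋂ (r : ℚ), ⋂ (_ : 0 < (r:ℝ) ∧ (r:ℝ) < s), ⋂ (u : ℚ), ⋂ (_ : c < (u:ℝ)),
              ⋃ (n : ℕ), ({ω | (g n ω).toFun (r:ℝ) ≤ ((u:ℝ) : WithBot ℝ)} ∩
               {ω | (Lm ω).toFun (r:ℝ) ≤ ((u:ℝ) : WithBot ℝ)}) := by
        ext ω
        simp only [Set.mem_setOf_eq, Set.mem_iInter, Set.mem_iUnion, Set.mem_inter_iff]
        rw [reg_le_iff (E := Eund ω) hs (hEbnd ω s hs.1 hs.2)]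
        constructor
        · intro h r hr u hu
          exact (hinner ω r).1 (h r hr.1 hr.2) u hu
        · intro h r hr1 hr2
          exact (hinner ω r).2 (fun u hu => h r ⟨hr1, hr2⟩ u hu)
      rw [heq]
      refine MeasurableSet.iInter fun r => MeasurableSet.iInter fun hr =>
        MeasurableSet.iInter fun u => MeasurableSet.iInter fun hu => MeasurableSet.iUnion fun n => ?_
      exact (eval_le_measurableSet hT (hΓmem _ (hgΓ n)).1 _ u).inter
        (eval_le_measurableSet hT hLm _ u)
    · have heq : {ω | (Lund ω).toFun s ≤ ((c:ℝ) : WithBot ℝ)} = Set.univ := by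
        ext ω
        simp only [Set.mem_setOf_eq, Set.mem_univ, iff_true]
        rw [show (Lund ω).toFun s = ⊥ from reg_of_not_mem hs]
        exact bot_le
      rw [heq]; exact MeasurableSet.univ
  -- lower bound
  have hlb : ∀ L ∈ Γ, lel T P Lund L := by
    intro L hL t h0 htT
    rcases eq_or_lt_of_le h0 with h0' | h0'
    · refine ae_of_all _ fun ω => ?_
      rw [show (Lund ω).toFun t = ⊥ from reg_of_not_mem (by rw [← h0']; simp)]
      exact bot_le
    · have hae : ∀ᵐ ω ∂P, ∀ s : ℚ, 0 < (s:ℝ) → (s:ℝ) < t →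
          ((⨅ n, Rv s (g n) ω) ≤ Rv s L ω) ∧
            ∀ n, (Lm ω).toFun (s:ℝ) ≤ (g n ω).toFun (s:ℝ) := by
        rw [ae_all_iff]
        intro s
        by_cases hst : 0 < (s:ℝ) ∧ (s:ℝ) < t
        · have h1 := hsel s L hL
          have h2 : ∀ᵐ ω ∂P, ∀ n, (Lm ω).toFun (s:ℝ) ≤ (g n ω).toFun (s:ℝ) := by
            rw [ae_all_iff]
            intro n
            exact (hΓmem _ (hgΓ n)).2.1 (s:ℝ) (le_of_lt hst.1) (lt_trans hst.2 htT)
          filter_upwards [h1, h2] with ω hω1 hω2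
          exact fun _ _ => ⟨hω1, hω2⟩
        · refine ae_of_all _ fun ω hs1 hs2 => absurd ⟨hs1, hs2⟩ hst
      filter_upwards [hae] with ω hω
      refine reg_le ⟨h0', htT⟩ ?_
      intro r hr1 hr2
      obtain ⟨harc, hdom⟩ := hω r hr1 hr2
      have hrT : (r:ℝ) < T := lt_trans hr2 htT
      have hrIoo : (r:ℝ) ∈ Set.Ioo 0 T := ⟨hr1, hrT⟩
      set xL : ℝ := WithBot.unbotD 0 ((L ω).toFun (r:ℝ)) with hxL
      set yn : ℕ → ℝ := fun n => WithBot.unbotD 0 ((g n ω).toFun (r:ℝ)) with hyn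
      set m : ℝ := WithBot.unbotD 0 ((Lm ω).toFun (r:ℝ)) with hm
      have hLcoe := (L ω).coe_unbot hrIoo
      have hgcoe : ∀ n, (g n ω).toFun (r:ℝ) = ((yn n : ℝ) : WithBot ℝ) :=
        fun n => (g n ω).coe_unbot hrIoo
      have hmcoe := (Lm ω).coe_unbot hrIoo
      have hmyn : ∀ n, m ≤ yn n := by
        intro n
        have := hdom n
        rw [hgcoe n, hmcoe, WithBot.coe_le_coe] at this
        exact this
      have hbddyn : BddBelow (Set.range yn) := ⟨m, by rintro y ⟨n, rfl⟩; exact hmyn n⟩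
      have harc2 : Real.arctan (⨅ n, yn n) ≤ Real.arctan xL := by
        have hmap : Real.arctan (⨅ n, yn n) = ⨅ n, Real.arctan (yn n) :=
          Real.arctan_strictMono.monotone.map_ciInf_of_continuousAt
            (Real.continuous_arctan.continuousAt) hbddyn
        rw [hmap]
        exact harc
      have hinf_le : (⨅ n, yn n) ≤ xL := Real.arctan_strictMono.le_iff_le.1 harc2
      -- Eund ω r ≤ ↑xL + ε for every ε
      have hEund_le : Eund ω r ≤ ((xL : ℝ) : WithBot ℝ) := by
        cases hE : Eund ω r with
        | bot => exact bot_le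
        | coe z =>
          rw [WithBot.coe_le_coe]
          refine coe_le_coe_of_forall_pos ?_
          intro ε hε
          have hlt : (⨅ n, yn n) < xL + ε := by linarith
          obtain ⟨n, hn⟩ := exists_lt_of_ciInf_lt hlt
          have hmax : max ((g n ω).toFun (r:ℝ)) ((Lm ω).toFun (r:ℝ)) = ((yn n : ℝ) : WithBot ℝ) := by
            rw [max_eq_left (hdom n), hgcoe n]
          have hle : Eund ω r ≤ ((yn n : ℝ) : WithBot ℝ) := by
            rw [← hmax]
            exact csInf_le (OrderBot.bddBelow _) ⟨n, rfl⟩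
          rw [hE, WithBot.coe_le_coe] at hle
          linarith
      refine le_trans hEund_le ?_
      rw [← hLcoe]
      exact (L ω).mono (le_of_lt hr1) (le_of_lt hr2) htT
  -- MemL0
  have hmem0 : MemL0 T P Lm Lp Lund := by
    refine ⟨hmeas, ?_, ?_⟩
    · intro t h0 htT
      refine ae_of_all _ fun ω => ?_
      rcases eq_or_lt_of_le h0 with h0' | h0'
      · rw [(Lm ω).bot' (by rw [← h0']; simp)]
        exact bot_le
      · refine (Lm ω).le_of_rat ⟨h0', htT⟩ ?_
        intro r hr1 hr2
        refine le_trans (hEu_ge ω r) ?_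
        exact le_reg ⟨h0', htT⟩ hr1 hr2 (hEbnd ω t h0' htT)
    · exact lel_trans (hlb _ (hgΓ 0)) (hΓmem _ (hgΓ 0)).2.2
  refine ⟨Lund, hmem0, hlb, ?_⟩
  -- greatest lower bound
  intro M hM hMlb t h0 htT
  rcases eq_or_lt_of_le h0 with h0' | h0'
  · refine ae_of_all _ fun ω => ?_
    rw [(M ω).bot' (by rw [← h0']; simp)]
    exact bot_le
  · have hae : ∀ᵐ ω ∂P, ∀ s : ℚ, 0 < (s:ℝ) → (s:ℝ) < t →
        ∀ n, (M ω).toFun (s:ℝ) ≤ (g n ω).toFun (s:ℝ) := by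
      rw [ae_all_iff]
      intro s
      by_cases hst : 0 < (s:ℝ) ∧ (s:ℝ) < t
      · have h2 : ∀ᵐ ω ∂P, ∀ n, (M ω).toFun (s:ℝ) ≤ (g n ω).toFun (s:ℝ) := by
          rw [ae_all_iff]
          intro n
          exact hMlb _ (hgΓ n) (s:ℝ) (le_of_lt hst.1) (lt_trans hst.2 htT)
        filter_upwards [h2] with ω hω
        exact fun _ _ => hω
      · refine ae_of_all _ fun ω hs1 hs2 => absurd ⟨hs1, hs2⟩ hst
    filter_upwards [hae, hM.2.1 t h0 htT] with ω hω hω2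
    refine (M ω).le_of_rat ⟨h0', htT⟩ ?_
    intro r hr1 hr2
    have hMr : (M ω).toFun (r:ℝ) ≤ Eund ω r := by
      refine le_csInf (Set.range_nonempty _) ?_
      rintro x ⟨n, rfl⟩
      exact le_trans (hω r hr1 hr2 n) (le_max_left _ _)
    exact le_trans hMr (le_reg ⟨h0', htT⟩ hr1 hr2 (hEbnd ω t h0' htT))

end Assembly

/-- **`(𝕃₀, ≤_l)` is a complete lattice (Proposition 4.2).**
Every nonempty `Γ ⊆ 𝕃₀` has a least upper bound and a greatest lower bound in
`(𝕃₀, ≤_l)`. -/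
theorem L0_complete_lattice (T : ℝ) (hT : 0 < T)
    {Ω : Type*} [MeasurableSpace Ω] (P : Measure Ω) [IsProbabilityMeasure P]
    (Lm Lp : Ω → VPlus T) (hLm : Measurable Lm) (hLp : Measurable Lp)
    (hLmLp : lel T P Lm Lp)
    (Γ : Set (Ω → VPlus T)) (hΓmem : ∀ L ∈ Γ, MemL0 T P Lm Lp L)
    (hΓne : Γ.Nonempty) :
    (∃ Lbar : Ω → VPlus T, MemL0 T P Lm Lp Lbar ∧
      (∀ L ∈ Γ, lel T P L Lbar) ∧
      (∀ M : Ω → VPlus T, MemL0 T P Lm Lp M → (∀ L ∈ Γ, lel T P L M) →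
        lel T P Lbar M)) ∧
    (∃ Lund : Ω → VPlus T, MemL0 T P Lm Lp Lund ∧
      (∀ L ∈ Γ, lel T P Lund L) ∧
      (∀ M : Ω → VPlus T, MemL0 T P Lm Lp M → (∀ L ∈ Γ, lel T P M L) →
        lel T P M Lund)) :=
  ⟨exists_lub hT P Lm Lp hLm hLp hLmLp Γ hΓmem hΓne,
   exists_glb hT P Lm Lp hLm hLp hLmLp Γ hΓmem hΓne⟩

end
end

section
/- Let (ℙ̄_n)_{n∈ℕ} be probability measures on (Ω̄, 𝓕̄) such that for every n: (a) the Ω-marginal of ℙ̄_n equals ℙ, and (b) for every t ∈ [0,T], ℙ̄_n[Θ ≤ t | 𝓕̄⁰] = ℙ̄_n[Θ ≤ t | 𝓕̄⁰_t] ℙ̄_n-almost surely. If ℙ̄_n converges stably to a probability measure ℙ̄ on (Ω̄, 𝓕̄), then ℙ̄ also satisfies (a) and (b). In other words, the set of probability measures on (Ω̄, 𝓕̄) satisfying (a) and (b) is sequentially closed for stable convergence. -/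
open MeasureTheory Filter Set Topology

noncomputable section

namespace StableAux


/-- The continuous ramp: 1 for `θ ≤ t`, 0 for `θ ≥ s`, linear in between. -/
def ramp (t s θ : ℝ) : ℝ := max 0 ((s - max t θ) / (s - t))

lemma ramp_nonneg (t s θ : ℝ) : 0 ≤ ramp t s θ := le_max_left _ _

lemma ramp_le_one {t s : ℝ} (hts : t < s) (θ : ℝ) : ramp t s θ ≤ 1 := by
  refine max_le zero_le_one ?_
  rw [div_le_one (by linarith)]
  have := le_max_left t θ
  linarith

lemma ramp_continuous (t s : ℝ) : Continuous (ramp t s) :=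
  continuous_const.max ((continuous_const.sub (continuous_const.max continuous_id)).div_const _)

lemma ramp_of_le {t s θ : ℝ} (hts : t < s) (h : θ ≤ t) : ramp t s θ = 1 := by
  rw [ramp, max_eq_left h, div_self (by linarith), max_eq_right zero_le_one]

lemma ramp_of_ge {t s θ : ℝ} (hts : t < s) (h : s ≤ θ) : ramp t s θ = 0 := by
  rw [ramp, max_eq_left]
  apply div_nonpos_of_nonpos_of_nonneg
  · have := le_max_right t θ; linarith
  · linarith

lemma abs_ramp_le {t s : ℝ} (hts : t < s) (θ : ℝ) : |ramp t s θ| ≤ 1 := by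
  rw [abs_of_nonneg (ramp_nonneg t s θ)]; exact ramp_le_one hts θ




variable {α : Type*} {mα : MeasurableSpace α} {μ : Measure α}

lemma integrable_of_bound [IsFiniteMeasure μ] {f : α → ℝ} (hf : Measurable[mα] f) (C : ℝ)
    (hC : ∀ x, |f x| ≤ C) : Integrable f μ := by
  refine (integrable_const C).mono' hf.aestronglyMeasurable ?_
  exact ae_of_all _ fun x => by simpa [Real.norm_eq_abs] using hC x

lemma condexp_abs_le {m : MeasurableSpace α} (hm : m ≤ mα) [IsFiniteMeasure μ]
    {f : α → ℝ} (hf : Measurable[mα] f) {C : ℝ} (hfb : ∀ x, |f x| ≤ C) :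
    ∀ᵐ x ∂μ, |(μ[f|m]) x| ≤ C := by
  have hint : Integrable f μ := integrable_of_bound hf C hfb
  have h1 : μ[f|m] ≤ᵐ[μ] μ[(fun _ => C : α → ℝ)|m] :=
    condExp_mono hint (integrable_const C) (ae_of_all _ fun x => (abs_le.mp (hfb x)).2)
  have h2 : μ[(fun _ => (-C) : α → ℝ)|m] ≤ᵐ[μ] μ[f|m] :=
    condExp_mono (integrable_const _) hint (ae_of_all _ fun x => (abs_le.mp (hfb x)).1)
  rw [condExp_const hm] at h1
  rw [condExp_const hm] at h2
  filter_upwards [h1, h2] with x hx1 hx2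
  exact abs_le.mpr ⟨hx2, hx1⟩

/-- Pull an `m`-measurable bounded factor out: `∫ X·Z = ∫ X·E[Z|m]`. -/
lemma integral_mul_condexp_of_meas {m : MeasurableSpace α} (hm : m ≤ mα) [IsFiniteMeasure μ]
    {X Z : α → ℝ} (hX : StronglyMeasurable[m] X) {C : ℝ} (hXb : ∀ x, |X x| ≤ C)
    (hZ : Integrable Z μ) :
    ∫ x, X x * Z x ∂μ = ∫ x, X x * (μ[Z|m]) x ∂μ := by
  haveI : SigmaFinite (μ.trim hm) := by
    haveI := isFiniteMeasure_trim (μ := μ) hm; infer_instance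
  have h := condExp_stronglyMeasurable_mul_of_bound hm hX hZ C
    (ae_of_all _ fun x => by simpa [Real.norm_eq_abs] using hXb x)
  calc ∫ x, X x * Z x ∂μ = ∫ x, (μ[(fun x => X x * Z x)|m]) x ∂μ := (integral_condExp hm).symm
    _ = ∫ x, X x * (μ[Z|m]) x ∂μ := integral_congr_ae h

/-- Swap: `∫ X·E[Z|m] = ∫ E[X|m]·Z`. -/
lemma integral_mul_condexp_swap {m : MeasurableSpace α} (hm : m ≤ mα) [IsFiniteMeasure μ]
    {X Z : α → ℝ} (hX : Measurable[mα] X) (hZ : Measurable[mα] Z) {C C' : ℝ}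
    (hXb : ∀ x, |X x| ≤ C) (hZb : ∀ x, |Z x| ≤ C') :
    ∫ x, X x * (μ[Z|m]) x ∂μ = ∫ x, (μ[X|m]) x * Z x ∂μ := by
  haveI : SigmaFinite (μ.trim hm) := by
    haveI := isFiniteMeasure_trim (μ := μ) hm; infer_instance
  have hXi : Integrable X μ := integrable_of_bound hX C hXb
  have hZi : Integrable Z μ := integrable_of_bound hZ C' hZb
  have h1 : μ[(fun x => (μ[Z|m]) x * X x)|m] =ᵐ[μ] fun x => (μ[Z|m]) x * (μ[X|m]) x :=
    condExp_stronglyMeasurable_mul_of_bound hm stronglyMeasurable_condExp hXi C'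
      (by filter_upwards [condexp_abs_le hm hZ hZb] with x hx; simpa [Real.norm_eq_abs] using hx)
  have h2 : μ[(fun x => (μ[X|m]) x * Z x)|m] =ᵐ[μ] fun x => (μ[X|m]) x * (μ[Z|m]) x :=
    condExp_stronglyMeasurable_mul_of_bound hm stronglyMeasurable_condExp hZi C
      (by filter_upwards [condexp_abs_le hm hX hXb] with x hx; simpa [Real.norm_eq_abs] using hx)
  calc ∫ x, X x * (μ[Z|m]) x ∂μ
      = ∫ x, (μ[Z|m]) x * X x ∂μ := by simp_rw [mul_comm]
    _ = ∫ x, (μ[(fun x => (μ[Z|m]) x * X x)|m]) x ∂μ := (integral_condExp hm).symm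
    _ = ∫ x, (μ[Z|m]) x * (μ[X|m]) x ∂μ := integral_congr_ae h1
    _ = ∫ x, (μ[(fun x => (μ[X|m]) x * Z x)|m]) x ∂μ := by
        rw [integral_congr_ae h2]; simp_rw [mul_comm]
    _ = ∫ x, (μ[X|m]) x * Z x ∂μ := integral_condExp hm



variable {Ω S : Type*} [mΩ : MeasurableSpace Ω] [mS : MeasurableSpace S]

/-- Conditional expectation w.r.t. a comap-along-`fst` σ-algebra factors through `fst`. -/
lemma condexp_comap_fst {Ω S : Type*} {G : MeasurableSpace Ω}
    [mΩ : MeasurableSpace Ω] [mS : MeasurableSpace S]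
    {Q : Measure (Ω × S)} [IsProbabilityMeasure Q]
    {P : Measure Ω} [IsProbabilityMeasure P] (hmap : Q.map Prod.fst = P)
    (hG : G ≤ mΩ) {g : Ω → ℝ} (hg : Measurable[mΩ] g)
    {C : ℝ} (hgb : ∀ ω, |g ω| ≤ C) :
    Q[(fun p => g p.1)|G.comap Prod.fst] =ᵐ[Q] fun p => (P[g|G]) p.1 := by
  have hcomap : G.comap Prod.fst ≤ @Prod.instMeasurableSpace Ω S mΩ mS :=
    (MeasurableSpace.comap_mono hG).trans (measurable_fst.comap_le)
  haveI : SigmaFinite (Q.trim hcomap) := by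
    haveI := isFiniteMeasure_trim (μ := Q) hcomap; infer_instance
  have hgi : Integrable g P := by
    refine (integrable_const C).mono' hg.aestronglyMeasurable ?_
    exact ae_of_all _ fun x => by simpa [Real.norm_eq_abs] using hgb x
  have hgfi : Integrable (fun p : Ω × S => g p.1) Q := by
    refine (integrable_const C).mono' (hg.comp measurable_fst).aestronglyMeasurable ?_
    exact ae_of_all _ fun x => by simpa [Real.norm_eq_abs] using hgb x.1
  have hqi : Integrable (fun p : Ω × S => (P[g|G]) p.1) Q := by
    have h : Integrable (P[g|G]) (Q.map Prod.fst) := by rw [hmap]; exact integrable_condExp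
    exact h.comp_measurable measurable_fst
  refine (ae_eq_condExp_of_forall_setIntegral_eq hcomap hgfi
    (fun s _ _ => hqi.integrableOn) (fun s hs _ => ?_) ?_).symm
  · obtain ⟨A, hA, rfl⟩ := MeasurableSpace.measurableSet_comap.mp hs
    have hA' : MeasurableSet[mΩ] A := hG _ hA
    have hsets : ∀ f : Ω → ℝ, AEStronglyMeasurable f P →
        ∫ p in Prod.fst ⁻¹' A, f p.1 ∂Q = ∫ ω in A, f ω ∂P := by
      intro f hf
      rw [← hmap] at hf ⊢
      exact (setIntegral_map hA' hf measurable_fst.aemeasurable).symm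
    calc ∫ p in Prod.fst ⁻¹' A, (P[g|G]) p.1 ∂Q
        = ∫ ω in A, (P[g|G]) ω ∂P :=
          hsets _ (stronglyMeasurable_condExp.mono hG).aestronglyMeasurable
      _ = ∫ ω in A, g ω ∂P := setIntegral_condExp hG hgi hA
      _ = ∫ p in Prod.fst ⁻¹' A, g p.1 ∂Q := (hsets _ hg.aestronglyMeasurable).symm
  · exact (stronglyMeasurable_condExp.comp_measurable
      (comap_measurable Prod.fst)).aestronglyMeasurable

/-- Transfer an a.e. equality along the first marginal. -/
lemma ae_comp_fst {Q : Measure (Ω × S)} {P : Measure Ω} (hmap : Q.map Prod.fst = P)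
    {q h : Ω → ℝ} (hq : Measurable[mΩ] q) (hh : Measurable[mΩ] h) (he : q =ᵐ[P] h) :
    (fun p : Ω × S => q p.1) =ᵐ[Q] fun p => h p.1 := by
  rw [← hmap] at he
  exact (ae_map_iff measurable_fst.aemeasurable (measurableSet_eq_fun hq hh)).mp he

/-- Bounded truncation giving a pointwise-bounded version of a conditional expectation. -/
lemma trunc_condexp {P : Measure Ω} [IsProbabilityMeasure P] {G : MeasurableSpace Ω}
    (hG : G ≤ mΩ) {g : Ω → ℝ} (hg : Measurable[mΩ] g) {C : ℝ} (hC0 : 0 ≤ C)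
    (hgb : ∀ ω, |g ω| ≤ C) :
    ∃ q : Ω → ℝ, Measurable[G] q ∧ (∀ ω, |q ω| ≤ C) ∧ q =ᵐ[P] P[g|G] := by
  refine ⟨fun ω => max (-C) (min C ((P[g|G]) ω)), ?_, ?_, ?_⟩
  · exact measurable_const.max (measurable_const.min stronglyMeasurable_condExp.measurable)
  · intro ω
    rw [abs_le]
    constructor
    · exact le_max_left _ _
    · exact max_le (by linarith) (min_le_left _ _)
  · filter_upwards [condexp_abs_le hG hg hgb] with ω hω
    rw [min_eq_right (abs_le.mp hω).2, max_eq_right (abs_le.mp hω).1]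


section Key

variable {Ω : Type*} [m0 : MeasurableSpace Ω]

/-- The indicator of `{Θ ≤ u}` on the enlarged space. -/
def Ind (T u : ℝ) : Ω × Set.Icc (0 : ℝ) T → ℝ :=
  Set.indicator {p : Ω × Set.Icc (0 : ℝ) T | (p.2 : ℝ) ≤ u} fun _ => 1

lemma Ind_measurable (T u : ℝ) : Measurable (Ind (Ω := Ω) T u) := by
  refine Measurable.indicator measurable_const ?_
  exact measurableSet_le (measurable_subtype_coe.comp measurable_snd) measurable_const

lemma Ind_abs_le (T u : ℝ) (p : Ω × Set.Icc (0 : ℝ) T) : |Ind T u p| ≤ 1 := by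
  rw [Ind, Set.indicator_apply]
  split <;> simp

lemma Ind_apply (T u : ℝ) (p : Ω × Set.Icc (0 : ℝ) T) :
    Ind T u p = if (p.2 : ℝ) ≤ u then 1 else 0 := by
  rw [Ind, Set.indicator_apply]; rfl

variable {P : Measure Ω} [IsProbabilityMeasure P] {F : Filtration ℝ m0} {T : ℝ}
    {Q : Measure (Ω × Set.Icc (0 : ℝ) T)} [IsProbabilityMeasure Q]

lemma key_integral (hmap : Q.map Prod.fst = P) {u : ℝ}
    (hbQ : Q[Ind T u|MeasurableSpace.comap Prod.fst m0]
        =ᵐ[Q] Q[Ind T u|MeasurableSpace.comap Prod.fst (F u)])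
    {g h : Ω → ℝ} (hg : Measurable[m0] g) {Cg : ℝ} (hgb : ∀ ω, |g ω| ≤ Cg)
    (hh : Measurable[m0] h) {Ch : ℝ} (hhb : ∀ ω, |h ω| ≤ Ch)
    (hhe : h =ᵐ[P] P[g|F u]) :
    ∫ p, g p.1 * Ind T u p ∂Q = ∫ p, h p.1 * Ind T u p ∂Q := by
  have hκm : MeasurableSpace.comap Prod.fst m0 ≤
      @Prod.instMeasurableSpace Ω (Set.Icc (0:ℝ) T) m0 _ := measurable_fst.comap_le
  have hκu : MeasurableSpace.comap Prod.fst (F u) ≤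
      @Prod.instMeasurableSpace Ω (Set.Icc (0:ℝ) T) m0 _ :=
    (MeasurableSpace.comap_mono (F.le u)).trans measurable_fst.comap_le
  have hIi : Integrable (Ind T u) Q := integrable_of_bound (Ind_measurable T u) 1 (Ind_abs_le T u)
  have hgf : Measurable (fun p : Ω × Set.Icc (0:ℝ) T => g p.1) := hg.comp measurable_fst
  calc ∫ p, g p.1 * Ind T u p ∂Q
      = ∫ p, g p.1 * (Q[Ind T u|MeasurableSpace.comap Prod.fst m0]) p ∂Q :=
        integral_mul_condexp_of_meas hκm
          ((hg.comp (comap_measurable Prod.fst)).stronglyMeasurable) (fun p => hgb p.1) hIi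
    _ = ∫ p, g p.1 * (Q[Ind T u|MeasurableSpace.comap Prod.fst (F u)]) p ∂Q :=
        integral_congr_ae (by filter_upwards [hbQ] with p hp; rw [hp])
    _ = ∫ p, (Q[(fun p : Ω × Set.Icc (0:ℝ) T => g p.1)|MeasurableSpace.comap Prod.fst (F u)]) p
          * Ind T u p ∂Q :=
        integral_mul_condexp_swap hκu hgf (Ind_measurable T u) (fun p => hgb p.1) (Ind_abs_le T u)
    _ = ∫ p, (P[g|F u]) p.1 * Ind T u p ∂Q := by
        refine integral_congr_ae ?_
        filter_upwards [condexp_comap_fst hmap (F.le u) hg hgb] with p hp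
        rw [hp]
    _ = ∫ p, h p.1 * Ind T u p ∂Q := by
        refine integral_congr_ae ?_
        filter_upwards [ae_comp_fst (S := Set.Icc (0:ℝ) T) hmap
          ((stronglyMeasurable_condExp.mono (F.le u)).measurable) hh hhe.symm] with p hp
        rw [hp]

lemma key2 (hmap : Q.map Prod.fst = P)
    (hbQ : ∀ u ∈ Set.Icc (0:ℝ) T, Q[Ind T u|MeasurableSpace.comap Prod.fst m0]
        =ᵐ[Q] Q[Ind T u|MeasurableSpace.comap Prod.fst (F u)])
    {s u : ℝ} (hu : u ∈ Set.Icc (0:ℝ) T) (hus : u ≤ s)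
    {g k : Ω → ℝ} (hg : Measurable[m0] g) {C : ℝ} (hC0 : 0 ≤ C) (hgb : ∀ ω, |g ω| ≤ C)
    (hk : Measurable[m0] k) (hkb : ∀ ω, |k ω| ≤ C) (hke : k =ᵐ[P] P[g|F s]) :
    ∫ p, g p.1 * Ind T u p ∂Q = ∫ p, k p.1 * Ind T u p ∂Q := by
  obtain ⟨q, hqG, hqb, hqe⟩ := trunc_condexp (P := P) (F.le u) hg hC0 hgb
  have hq : Measurable[m0] q := hqG.mono (F.le u) le_rfl
  haveI : SigmaFinite (P.trim ((F.mono hus).trans (F.le s))) := by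
    haveI := isFiniteMeasure_trim (μ := P) ((F.mono hus).trans (F.le s)); infer_instance
  have hke' : q =ᵐ[P] P[k|F u] := by
    refine hqe.trans ?_
    exact ((condExp_congr_ae hke).trans (condExp_condExp_of_le (F.mono hus) (F.le s))).symm
  calc ∫ p, g p.1 * Ind T u p ∂Q
      = ∫ p, q p.1 * Ind T u p ∂Q := key_integral hmap (hbQ u hu) hg hgb hq hqb hqe
    _ = ∫ p, k p.1 * Ind T u p ∂Q :=
        (key_integral hmap (hbQ u hu) hk hkb hq hqb hke').symm

end Key


section RampZero

variable {Ω : Type*} [m0 : MeasurableSpace Ω]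
variable {P : Measure Ω} [IsProbabilityMeasure P] {F : Filtration ℝ m0} {T : ℝ}
    {Q : Measure (Ω × Set.Icc (0 : ℝ) T)} [IsProbabilityMeasure Q]

lemma ramp_zero (hmap : Q.map Prod.fst = P)
    (hbQ : ∀ u ∈ Set.Icc (0:ℝ) T, Q[Ind T u|MeasurableSpace.comap Prod.fst m0]
        =ᵐ[Q] Q[Ind T u|MeasurableSpace.comap Prod.fst (F u)])
    {t s' s : ℝ} (ht : 0 ≤ t) (hts : t < s') (hs's : s' ≤ s) (hsT : s ≤ T)
    {g k : Ω → ℝ} (hg : Measurable[m0] g) {C : ℝ} (hC0 : 0 ≤ C) (hgb : ∀ ω, |g ω| ≤ C)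
    (hk : Measurable[m0] k) (hkb : ∀ ω, |k ω| ≤ C) (hke : k =ᵐ[P] P[g|F s]) :
    ∫ p, (g p.1 - k p.1) * ramp t s' (p.2 : ℝ) ∂Q = 0 := by
  set ν : Measure ℝ := volume.restrict (Set.Ioc t s') with hν
  haveI : IsFiniteMeasure ν := by
    constructor
    rw [hν, Measure.restrict_apply_univ]
    exact measure_Ioc_lt_top
  set H : (Ω × Set.Icc (0:ℝ) T) × ℝ → ℝ := fun q =>
    (g q.1.1 - k q.1.1) * Set.indicator {q' : (Ω × Set.Icc (0:ℝ) T) × ℝ | (q'.1.2 : ℝ) ≤ q'.2}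
      (fun _ => 1) q with hH
  have hHset : MeasurableSet {q' : (Ω × Set.Icc (0:ℝ) T) × ℝ | (q'.1.2 : ℝ) ≤ q'.2} :=
    measurableSet_le ((measurable_subtype_coe.comp measurable_snd).comp measurable_fst)
      measurable_snd
  have hHm : Measurable H :=
    ((hg.sub hk).comp (measurable_fst.comp measurable_fst)).mul
      (Measurable.indicator measurable_const hHset)
  have hHb : ∀ q, |H q| ≤ C + C := by
    intro q
    rw [hH, abs_mul]
    have h1 : |g q.1.1 - k q.1.1| ≤ C + C := (abs_sub _ _).trans (add_le_add (hgb _) (hkb _))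
    have h2 : |Set.indicator {q' : (Ω × Set.Icc (0:ℝ) T) × ℝ | (q'.1.2 : ℝ) ≤ q'.2}
        (fun _ => (1:ℝ)) q| ≤ 1 := by
      rw [Set.indicator_apply]; split <;> simp
    calc |g q.1.1 - k q.1.1| * |_| ≤ (C + C) * 1 :=
          mul_le_mul h1 h2 (abs_nonneg _) (by linarith)
      _ = C + C := mul_one _
  have hHi : Integrable H (Q.prod ν) := integrable_of_bound hHm (C + C) hHb
  have hswap : ∫ p, (∫ u, H (p, u) ∂ν) ∂Q = ∫ u, (∫ p, H (p, u) ∂Q) ∂ν :=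
    integral_integral_swap (f := fun p u => H (p, u)) (by exact hHi)
  -- the right-hand side vanishes
  have hker : ∀ u ∈ Set.Ioc t s', ∫ p, H (p, u) ∂Q = 0 := by
    intro u hu
    have hform : (fun p : Ω × Set.Icc (0:ℝ) T => H (p, u))
        = fun p => g p.1 * Ind T u p - k p.1 * Ind T u p := by
      funext p
      simp only [hH, Ind, Set.indicator_apply, Set.mem_setOf_eq]
      by_cases hc : (p.2 : ℝ) ≤ u
      · simp [hc, sub_mul]
      · simp [hc, sub_mul]
    have hgi : Integrable (fun p : Ω × Set.Icc (0:ℝ) T => g p.1 * Ind T u p) Q := by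
      refine integrable_of_bound (Measurable.mul (hg.comp measurable_fst) (Ind_measurable T u))
        C (fun p => ?_)
      rw [abs_mul]
      calc |g p.1| * |Ind T u p| ≤ C * 1 :=
            mul_le_mul (hgb _) (Ind_abs_le T u p) (abs_nonneg _) hC0
        _ = C := mul_one _
    have hki : Integrable (fun p : Ω × Set.Icc (0:ℝ) T => k p.1 * Ind T u p) Q := by
      refine integrable_of_bound (Measurable.mul (hk.comp measurable_fst) (Ind_measurable T u))
        C (fun p => ?_)
      rw [abs_mul]
      calc |k p.1| * |Ind T u p| ≤ C * 1 :=
            mul_le_mul (hkb _) (Ind_abs_le T u p) (abs_nonneg _) hC0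
        _ = C := mul_one _
    rw [hform, integral_sub hgi hki,
      key2 hmap hbQ ⟨ht.trans hu.1.le, hu.2.trans (hs's.trans hsT)⟩ (hu.2.trans hs's)
        hg hC0 hgb hk hkb hke, sub_self]
  have hrhs : ∫ u, (∫ p, H (p, u) ∂Q) ∂ν = 0 := by
    rw [hν]
    rw [setIntegral_congr_fun measurableSet_Ioc (fun u hu => hker u hu)]
    simp
  -- the left-hand side computes to the ramp integral
  have hinner : ∀ p : Ω × Set.Icc (0:ℝ) T,
      ∫ u, H (p, u) ∂ν = (g p.1 - k p.1) * (ramp t s' (p.2 : ℝ) * (s' - t)) := by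
    intro p
    set θ : ℝ := (p.2 : ℝ) with hθ
    have hind : (fun u : ℝ => H (p, u))
        = fun u => (g p.1 - k p.1) * Set.indicator (Set.Ici θ) (fun _ => (1:ℝ)) u := by
      funext u
      simp only [hH, Set.indicator_apply, Set.mem_setOf_eq, Set.mem_Ici, hθ]
    rw [hind, integral_const_mul, integral_indicator_const (1:ℝ) measurableSet_Ici,
      smul_eq_mul, mul_one]
    congr 1
    -- (ν (Ici θ)).toReal = ramp t s' θ * (s' - t)
    rw [measureReal_def, hν, Measure.restrict_apply measurableSet_Ici]
    by_cases hθt : θ ≤ t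
    · have hseteq : Set.Ici θ ∩ Set.Ioc t s' = Set.Ioc t s' := by
        apply Set.inter_eq_self_of_subset_right
        intro u hu
        exact le_trans hθt hu.1.le
      rw [hseteq, Real.volume_Ioc, ENNReal.toReal_ofReal (by linarith),
        ramp_of_le hts hθt, one_mul]
    · push_neg at hθt
      have hseteq : Set.Ici θ ∩ Set.Ioc t s' = Set.Icc θ s' := by
        ext u
        simp only [Set.mem_inter_iff, Set.mem_Ici, Set.mem_Ioc, Set.mem_Icc]
        constructor
        · rintro ⟨h1, _, h3⟩; exact ⟨h1, h3⟩
        · rintro ⟨h1, h2⟩; exact ⟨h1, lt_of_lt_of_le hθt h1, h2⟩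
      rw [hseteq, Real.volume_Icc]
      by_cases hθs : θ ≤ s'
      · rw [ENNReal.toReal_ofReal (by linarith)]
        rw [ramp, max_eq_right (le_of_lt hθt),
          max_eq_right (div_nonneg (by linarith) (by linarith)),
          div_mul_cancel₀ _ (by linarith : s' - t ≠ 0)]
      · push_neg at hθs
        rw [ENNReal.ofReal_of_nonpos (by linarith), ENNReal.toReal_zero,
          ramp_of_ge hts hθs.le, zero_mul]
  have hlhs : ∫ p, (∫ u, H (p, u) ∂ν) ∂Q
      = (∫ p, (g p.1 - k p.1) * ramp t s' (p.2 : ℝ) ∂Q) * (s' - t) := by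
    rw [integral_congr_ae (ae_of_all _ hinner)]
    rw [← integral_mul_const]
    congr 1
    funext p
    ring
  have : (∫ p, (g p.1 - k p.1) * ramp t s' (p.2 : ℝ) ∂Q) * (s' - t) = 0 := by
    rw [← hlhs, hswap, hrhs]
  rcases mul_eq_zero.mp this with h | h
  · exact h
  · exact absurd h (by linarith)

end RampZero

end StableAux

open StableAux

/-- **Stable limits preserve the marginal and the conditional-independence property
(Proposition C.2).**
On the enlarged space `Ω̄ = Ω × [0,T]` with `𝓕̄ = 𝓕 ⊗ 𝓑([0,T])`, `Θ(ω,θ) = θ`,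
`𝓕̄⁰ = 𝓕 ⊗ {∅,[0,T]}` and `𝓕̄⁰_t = 𝓕_t ⊗ {∅,[0,T]}`: if each `ℙ̄ₙ` has `Ω`-marginal `ℙ`
and satisfies `ℙ̄ₙ[Θ ≤ t | 𝓕̄⁰] = ℙ̄ₙ[Θ ≤ t | 𝓕̄⁰_t]` a.s. for all `t ∈ [0,T]`, and if
`ℙ̄ₙ → ℙ̄` stably, then `ℙ̄` has the same two properties. -/
theorem stable_limit_preserves_properties
    {Ω : Type*} [m0 : MeasurableSpace Ω] (P : Measure Ω) [IsProbabilityMeasure P]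
    (F : Filtration ℝ m0) (T : ℝ) (hT : 0 < T)
    (husual_complete : ∀ s : Set Ω, MeasurableSet s → P s = 0 → MeasurableSet[F 0] s)
    (husual_right : ∀ t : ℝ, F t = ⨅ s ∈ Set.Ioi t, F s)
    (Pn : ℕ → Measure (Ω × Set.Icc (0 : ℝ) T)) (hPn : ∀ n, IsProbabilityMeasure (Pn n))
    (Pbar : Measure (Ω × Set.Icc (0 : ℝ) T)) (hPbar : IsProbabilityMeasure Pbar)
    -- (a) the Ω-marginal of each ℙ̄ₙ is ℙ
    (ha : ∀ n, (Pn n).map Prod.fst = P)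
    -- (b) ℙ̄ₙ[Θ ≤ t | 𝓕̄⁰] = ℙ̄ₙ[Θ ≤ t | 𝓕̄⁰_t] a.s., for every t ∈ [0,T]
    (hb : ∀ n, ∀ t ∈ Set.Icc (0 : ℝ) T,
      (Pn n)[Set.indicator {p : Ω × Set.Icc (0 : ℝ) T | (p.2 : ℝ) ≤ t}
          (fun _ => (1 : ℝ)) | MeasurableSpace.comap Prod.fst m0]
        =ᵐ[Pn n]
      (Pn n)[Set.indicator {p : Ω × Set.Icc (0 : ℝ) T | (p.2 : ℝ) ≤ t}
          (fun _ => (1 : ℝ)) | MeasurableSpace.comap Prod.fst (F t)])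
    -- ℙ̄ₙ → ℙ̄ stably
    (hstable : ∀ ξ : Ω × Set.Icc (0 : ℝ) T → ℝ,
      Measurable ξ → (∃ C : ℝ, ∀ p, |ξ p| ≤ C) →
      (∀ ω : Ω, Continuous fun θ : Set.Icc (0 : ℝ) T => ξ (ω, θ)) →
      Tendsto (fun n => ∫ p, ξ p ∂(Pn n)) atTop (nhds (∫ p, ξ p ∂Pbar))) :
    Pbar.map Prod.fst = P ∧
      ∀ t ∈ Set.Icc (0 : ℝ) T,
        Pbar[Set.indicator {p : Ω × Set.Icc (0 : ℝ) T | (p.2 : ℝ) ≤ t}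
            (fun _ => (1 : ℝ)) | MeasurableSpace.comap Prod.fst m0]
          =ᵐ[Pbar]
        Pbar[Set.indicator {p : Ω × Set.Icc (0 : ℝ) T | (p.2 : ℝ) ≤ t}
            (fun _ => (1 : ℝ)) | MeasurableSpace.comap Prod.fst (F t)] := by
  classical
  -- Part (a)
  have key_a : ∀ A : Set Ω, MeasurableSet A → Pbar (Prod.fst ⁻¹' A) = P A := by
    intro A hA
    have hmeas : MeasurableSet (Prod.fst ⁻¹' A : Set (Ω × Set.Icc (0:ℝ) T)) :=
      measurable_fst hA
    set ξ : Ω × Set.Icc (0:ℝ) T → ℝ :=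
      Set.indicator (Prod.fst ⁻¹' A) (fun _ => (1:ℝ)) with hξ
    have hξm : Measurable ξ := measurable_const.indicator hmeas
    have hξb : ∀ p, |ξ p| ≤ 1 := by
      intro p; rw [hξ, Set.indicator_apply]; split <;> simp
    have hξc : ∀ ω : Ω, Continuous fun θ : Set.Icc (0:ℝ) T => ξ (ω, θ) := by
      intro ω
      by_cases hω : ω ∈ A
      · have : (fun θ : Set.Icc (0:ℝ) T => ξ (ω, θ)) = fun _ => 1 := by
          funext θ; rw [hξ, Set.indicator_apply, if_pos]; exact hω
        rw [this]; exact continuous_const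
      · have : (fun θ : Set.Icc (0:ℝ) T => ξ (ω, θ)) = fun _ => 0 := by
          funext θ; rw [hξ, Set.indicator_apply, if_neg]; exact hω
        rw [this]; exact continuous_const
    have h1 : ∀ n, ∫ p, ξ p ∂(Pn n) = (P A).toReal := by
      intro n
      rw [hξ, integral_indicator_const (1:ℝ) hmeas, smul_eq_mul, mul_one, measureReal_def,
        ← ha n, Measure.map_apply measurable_fst hA]
    have h2 : ∫ p, ξ p ∂Pbar = (Pbar (Prod.fst ⁻¹' A)).toReal := by
      rw [hξ, integral_indicator_const (1:ℝ) hmeas, smul_eq_mul, mul_one, measureReal_def]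
    have hlim := hstable ξ hξm ⟨1, hξb⟩ hξc
    rw [h2] at hlim
    have heq : (P A).toReal = (Pbar (Prod.fst ⁻¹' A)).toReal :=
      tendsto_nhds_unique (tendsto_const_nhds.congr fun n => (h1 n).symm) hlim
    exact ((ENNReal.toReal_eq_toReal_iff' (measure_ne_top _ _) (measure_ne_top _ _)).mp heq).symm
  have hmapbar : Pbar.map Prod.fst = P := by
    apply Measure.ext
    intro A hA
    rw [Measure.map_apply measurable_fst hA, key_a A hA]
  refine ⟨hmapbar, ?_⟩
  intro t ht
  show Pbar[Ind T t|MeasurableSpace.comap Prod.fst m0]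
      =ᵐ[Pbar] Pbar[Ind T t|MeasurableSpace.comap Prod.fst (F t)]
  have hκm_le : MeasurableSpace.comap Prod.fst m0 ≤
      @Prod.instMeasurableSpace Ω (Set.Icc (0:ℝ) T) m0 _ := measurable_fst.comap_le
  have hκ_le : ∀ s : ℝ, MeasurableSpace.comap Prod.fst (F s) ≤
      @Prod.instMeasurableSpace Ω (Set.Icc (0:ℝ) T) m0 _ := fun s =>
    (MeasurableSpace.comap_mono (F.le s)).trans measurable_fst.comap_le
  have hκκ : ∀ s : ℝ, MeasurableSpace.comap (Prod.fst : Ω × Set.Icc (0:ℝ) T → Ω) (F s) ≤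
      MeasurableSpace.comap (Prod.fst : Ω × Set.Icc (0:ℝ) T → Ω) m0 := fun s =>
    MeasurableSpace.comap_mono (F.le s)
  haveI hSFm : SigmaFinite (Pbar.trim hκm_le) := by
    haveI := isFiniteMeasure_trim (μ := Pbar) hκm_le; infer_instance
  haveI hSFt : SigmaFinite (Pbar.trim ((hκκ t).trans hκm_le)) := by
    haveI := isFiniteMeasure_trim (μ := Pbar) ((hκκ t).trans hκm_le); infer_instance
  by_cases htT : t = T
  · have huniv : {p : Ω × Set.Icc (0:ℝ) T | (p.2 : ℝ) ≤ t} = Set.univ :=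
      Set.eq_univ_of_forall fun p => by rw [htT]; exact p.2.2.2
    have hconst : Ind (Ω := Ω) T t = fun _ => (1:ℝ) := by
      rw [Ind, huniv, Set.indicator_univ]
    rw [hconst, condExp_const hκm_le, condExp_const (hκ_le t)]
  -- main case: t < T
  have htT' : t < T := lt_of_le_of_ne ht.2 htT
  have hIi : Integrable (Ind T t) Pbar :=
    integrable_of_bound (Ind_measurable T t) 1 (Ind_abs_le T t)
  -- the limit integral identity
  have hstar : ∀ s', t < s' → s' ≤ T → ∀ g : Ω → ℝ, Measurable[m0] g → (∀ ω, |g ω| ≤ 1) →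
      ∀ k : Ω → ℝ, Measurable[m0] k → (∀ ω, |k ω| ≤ 1) → k =ᵐ[P] P[g|F s'] →
      ∫ p, g p.1 * Ind T t p ∂Pbar = ∫ p, k p.1 * Ind T t p ∂Pbar := by
    intro s' hts' hs'T g hgm hgb k hkm hkb hke
    set σ : ℕ → ℝ := fun m => t + (s' - t)/(m+1) with hσdef
    have hσ1 : ∀ m : ℕ, t < σ m := by
      intro m
      have : (0:ℝ) < (s' - t)/(m+1) := div_pos (by linarith) (by positivity)
      simp only [hσdef]; linarith
    have hσ2 : ∀ m : ℕ, σ m ≤ s' := by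
      intro m
      have : (s' - t)/((m:ℝ)+1) ≤ (s' - t) := by
        apply div_le_self (by linarith)
        have : (0:ℝ) ≤ (m:ℝ) := Nat.cast_nonneg m
        linarith
      simp only [hσdef]; linarith
    have step1 : ∀ m n, ∫ p, (g p.1 - k p.1) * ramp t (σ m) (p.2 : ℝ) ∂(Pn n) = 0 := by
      intro m n
      haveI := hPn n
      exact ramp_zero (ha n) (fun u hu => hb n u hu) ht.1 (hσ1 m) ((hσ2 m)) hs'T
        hgm zero_le_one hgb hkm hkb hke
    have step2 : ∀ m, ∫ p, (g p.1 - k p.1) * ramp t (σ m) (p.2 : ℝ) ∂Pbar = 0 := by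
      intro m
      set ζ : Ω × Set.Icc (0:ℝ) T → ℝ := fun p => (g p.1 - k p.1) * ramp t (σ m) (p.2 : ℝ)
        with hζdef
      have hζm : Measurable ζ :=
        ((hgm.sub hkm).comp measurable_fst).mul
          (((ramp_continuous t (σ m)).measurable).comp
            (measurable_subtype_coe.comp measurable_snd))
      have hζb : ∀ p, |ζ p| ≤ 2 := by
        intro p
        rw [hζdef, abs_mul]
        have h1 : |g p.1 - k p.1| ≤ 2 := by
          have := abs_sub (g p.1) (k p.1)
          have := hgb p.1; have := hkb p.1
          calc |g p.1 - k p.1| ≤ |g p.1| + |k p.1| := abs_sub _ _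
            _ ≤ 2 := by linarith
        calc |g p.1 - k p.1| * |ramp t (σ m) (p.2:ℝ)| ≤ 2 * 1 :=
              mul_le_mul h1 (abs_ramp_le (hσ1 m) _) (abs_nonneg _) (by norm_num)
          _ = 2 := by norm_num
      have hζc : ∀ ω : Ω, Continuous fun θ : Set.Icc (0:ℝ) T => ζ (ω, θ) := by
        intro ω
        simp only [hζdef]
        exact continuous_const.mul ((ramp_continuous t (σ m)).comp continuous_subtype_val)
      exact (tendsto_nhds_unique (tendsto_const_nhds.congr fun n => (step1 m n).symm)
        (hstable ζ hζm ⟨2, hζb⟩ hζc)).symm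
    have step3 : ∫ p, (g p.1 - k p.1) * Ind T t p ∂Pbar = 0 := by
      have hDCT : Tendsto (fun m => ∫ p, (g p.1 - k p.1) * ramp t (σ m) (p.2 : ℝ) ∂Pbar)
          atTop (nhds (∫ p, (g p.1 - k p.1) * Ind T t p ∂Pbar)) := by
        refine tendsto_integral_of_dominated_convergence (fun _ => 2) ?_ ?_ ?_ ?_
        · intro m
          exact (((hgm.sub hkm).comp measurable_fst).mul
            (((ramp_continuous t (σ m)).measurable).comp
              (measurable_subtype_coe.comp measurable_snd))).aestronglyMeasurable
        · exact integrable_const 2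
        · intro m
          refine ae_of_all _ fun p => ?_
          rw [Real.norm_eq_abs, abs_mul]
          have h1 : |g p.1 - k p.1| ≤ 2 := by
            calc |g p.1 - k p.1| ≤ |g p.1| + |k p.1| := abs_sub _ _
              _ ≤ 2 := by have := hgb p.1; have := hkb p.1; linarith
          calc |g p.1 - k p.1| * |ramp t (σ m) (p.2:ℝ)| ≤ 2 * 1 :=
                mul_le_mul h1 (abs_ramp_le (hσ1 m) _) (abs_nonneg _) (by norm_num)
            _ = 2 := by norm_num
        · refine ae_of_all _ fun p => ?_
          by_cases hc : (p.2 : ℝ) ≤ t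
          · have : ∀ m, (g p.1 - k p.1) * ramp t (σ m) (p.2:ℝ)
                = (g p.1 - k p.1) * Ind T t p := by
              intro m
              rw [ramp_of_le (hσ1 m) hc, Ind_apply, if_pos hc]
            rw [show (fun m => (g p.1 - k p.1) * ramp t (σ m) (p.2:ℝ))
              = fun _ => (g p.1 - k p.1) * Ind T t p from funext this]
            exact tendsto_const_nhds
          · push_neg at hc
            have hval : (g p.1 - k p.1) * Ind T t p = 0 := by
              rw [Ind_apply, if_neg (not_le.mpr hc), mul_zero]
            rw [hval]
            obtain ⟨M, hM⟩ := exists_nat_gt ((s' - t)/((p.2:ℝ) - t))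
            have hev : (fun m : ℕ => (g p.1 - k p.1) * ramp t (σ m) (p.2:ℝ))
                =ᶠ[atTop] (fun _ => (0:ℝ)) := by
              refine eventually_atTop.mpr ⟨M, fun m hm => ?_⟩
              have hσm : σ m ≤ (p.2:ℝ) := by
                have h1 : (0:ℝ) < (p.2:ℝ) - t := by linarith
                have h2 : (s' - t)/((p.2:ℝ) - t) < (m:ℝ) + 1 := by
                  have : (M:ℝ) ≤ (m:ℝ) := Nat.cast_le.mpr hm
                  linarith
                have h3 : s' - t < ((m:ℝ)+1) * ((p.2:ℝ) - t) := by
                  have := (div_lt_iff₀ h1).mp h2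
                  linarith [this]
                have h4 : (s' - t)/((m:ℝ)+1) < (p.2:ℝ) - t := by
                  rw [div_lt_iff₀ (by positivity : (0:ℝ) < (m:ℝ)+1)]
                  calc s' - t < ((m:ℝ)+1) * ((p.2:ℝ) - t) := h3
                    _ = ((p.2:ℝ) - t) * ((m:ℝ)+1) := mul_comm _ _
                simp only [hσdef]; linarith
              show (g p.1 - k p.1) * ramp t (σ m) ((p.2:ℝ)) = 0
              rw [ramp_of_ge (hσ1 m) hσm, mul_zero]
            exact Tendsto.congr' hev.symm tendsto_const_nhds
      have := tendsto_nhds_unique (tendsto_const_nhds.congr fun m => (step2 m).symm) hDCT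
      exact this.symm
    have hgi : Integrable (fun p : Ω × Set.Icc (0:ℝ) T => g p.1 * Ind T t p) Pbar := by
      refine integrable_of_bound (Measurable.mul (hgm.comp measurable_fst)
        (Ind_measurable T t)) 1 (fun p => ?_)
      rw [abs_mul]
      calc |g p.1| * |Ind T t p| ≤ 1 * 1 :=
            mul_le_mul (hgb _) (Ind_abs_le T t p) (abs_nonneg _) zero_le_one
        _ = 1 := by norm_num
    have hki : Integrable (fun p : Ω × Set.Icc (0:ℝ) T => k p.1 * Ind T t p) Pbar := by
      refine integrable_of_bound (Measurable.mul (hkm.comp measurable_fst)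
        (Ind_measurable T t)) 1 (fun p => ?_)
      rw [abs_mul]
      calc |k p.1| * |Ind T t p| ≤ 1 * 1 :=
            mul_le_mul (hkb _) (Ind_abs_le T t p) (abs_nonneg _) zero_le_one
        _ = 1 := by norm_num
    have := step3
    rw [show (fun p : Ω × Set.Icc (0:ℝ) T => (g p.1 - k p.1) * Ind T t p)
      = fun p => g p.1 * Ind T t p - k p.1 * Ind T t p from funext fun p => by ring] at this
    rw [integral_sub hgi hki] at this
    linarith [this]
  -- transfer of the condexp identity to each level s' > t
  have hs_eq : ∀ s', t < s' → s' ≤ T →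
      Pbar[Ind T t|MeasurableSpace.comap Prod.fst (F s')] =ᵐ[Pbar]
      Pbar[Ind T t|MeasurableSpace.comap Prod.fst m0] := by
    intro s' hts' hs'T
    refine ae_eq_condExp_of_forall_setIntegral_eq hκm_le hIi
      (fun A hA _ => integrable_condExp.integrableOn) (fun SS hSS _ => ?_) ?_
    · obtain ⟨A, hA, rfl⟩ := MeasurableSpace.measurableSet_comap.mp hSS
      set g1 : Ω → ℝ := Set.indicator A (fun _ => 1) with hg1
      have hg1m : Measurable[m0] g1 := measurable_const.indicator hA
      have hg1b : ∀ ω, |g1 ω| ≤ 1 := by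
        intro ω; rw [hg1, Set.indicator_apply]; split <;> simp
      obtain ⟨k, hkG, hkb, hke⟩ := trunc_condexp (P := P) (F.le s') hg1m zero_le_one hg1b
      have hkm : Measurable[m0] k := hkG.mono (F.le s') le_rfl
      have hindf : ∀ f : Ω × Set.Icc (0:ℝ) T → ℝ,
          ∫ p in Prod.fst ⁻¹' A, f p ∂Pbar = ∫ p, g1 p.1 * f p ∂Pbar := by
        intro f
        rw [← integral_indicator (measurable_fst hA)]
        congr 1
        funext p
        by_cases hp : p.1 ∈ A
        · simp [hg1, Set.indicator_apply, Set.mem_preimage, hp]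
        · simp [hg1, Set.indicator_apply, Set.mem_preimage, hp]
      calc ∫ p in Prod.fst ⁻¹' A, (Pbar[Ind T t|MeasurableSpace.comap Prod.fst (F s')]) p ∂Pbar
          = ∫ p, g1 p.1 * (Pbar[Ind T t|MeasurableSpace.comap Prod.fst (F s')]) p ∂Pbar :=
            hindf _
        _ = ∫ p, (Pbar[(fun p : Ω × Set.Icc (0:ℝ) T => g1 p.1)|
              MeasurableSpace.comap Prod.fst (F s')]) p * Ind T t p ∂Pbar :=
            integral_mul_condexp_swap (hκ_le s') (hg1m.comp measurable_fst)
              (Ind_measurable T t) (fun p => hg1b p.1) (Ind_abs_le T t)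
        _ = ∫ p, k p.1 * Ind T t p ∂Pbar := by
            refine integral_congr_ae ?_
            have e1 := condexp_comap_fst hmapbar (F.le s') hg1m hg1b
            have e2 := ae_comp_fst (S := Set.Icc (0:ℝ) T) hmapbar
              ((stronglyMeasurable_condExp.mono (F.le s')).measurable) hkm hke.symm
            filter_upwards [e1, e2] with p h1 h2
            rw [h1, h2]
        _ = ∫ p, g1 p.1 * Ind T t p ∂Pbar :=
            (hstar s' hts' hs'T g1 hg1m hg1b k hkm hkb hke).symm
        _ = ∫ p in Prod.fst ⁻¹' A, Ind T t p ∂Pbar := (hindf _).symm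
    · exact (stronglyMeasurable_condExp.mono (hκκ s')).aestronglyMeasurable
  -- construction of an honest `F t`-measurable version via completeness and right-continuity
  set θ0 : Set.Icc (0:ℝ) T := ⟨0, ⟨le_refl 0, le_of_lt hT⟩⟩ with hθ0
  set sj : ℕ → ℝ := fun j => t + (T - t)/(j+1) with hsj
  have hsj1 : ∀ j : ℕ, t < sj j := by
    intro j
    have : (0:ℝ) < (T - t)/((j:ℝ)+1) := div_pos (by linarith) (by positivity)
    simp only [hsj]; linarith
  have hsj2 : ∀ j : ℕ, sj j ≤ T := by
    intro j
    have h0 : (0:ℝ) ≤ (j:ℝ) := Nat.cast_nonneg j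
    have h1 : (T - t)/((j:ℝ)+1) ≤ T - t := div_le_self (by linarith) (by linarith)
    simp only [hsj]; linarith
  set Y : Ω × Set.Icc (0:ℝ) T → ℝ := Pbar[Ind T t|MeasurableSpace.comap Prod.fst m0] with hY
  set Yj : ℕ → (Ω × Set.Icc (0:ℝ) T → ℝ) :=
    fun j => Pbar[Ind T t|MeasurableSpace.comap Prod.fst (F (sj j))] with hYjdef
  have hYjY : ∀ j, Yj j =ᵐ[Pbar] Y := fun j => hs_eq (sj j) (hsj1 j) (hsj2 j)
  set Wj : ℕ → Ω → ℝ := fun j ω => Yj j (ω, θ0) with hWjdef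
  have hfactor : ∀ j (B : Set ℝ), MeasurableSet B →
      ∃ A : Set Ω, MeasurableSet[F (sj j)] A ∧ Yj j ⁻¹' B = Prod.fst ⁻¹' A := by
    intro j B hB
    have hYjm : Measurable[MeasurableSpace.comap Prod.fst (F (sj j))] (Yj j) :=
      stronglyMeasurable_condExp.measurable
    obtain ⟨A, hA, hpre⟩ := MeasurableSpace.measurableSet_comap.mp (hYjm hB)
    exact ⟨A, hA, hpre.symm⟩
  have hYW : ∀ j (p : Ω × Set.Icc (0:ℝ) T), Yj j p = Wj j p.1 := by
    intro j p
    obtain ⟨A, hA, hpre⟩ := hfactor j {Yj j (p.1, θ0)} (measurableSet_singleton _)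
    have h0 : (p.1, θ0) ∈ Yj j ⁻¹' {Yj j (p.1, θ0)} := rfl
    rw [hpre] at h0
    have h1 : p ∈ Prod.fst ⁻¹' A := h0
    rw [← hpre] at h1
    exact h1
  have hWm : ∀ j, Measurable[F (sj j)] (Wj j) := by
    intro j B hB
    obtain ⟨A, hA, hpre⟩ := hfactor j B hB
    have hset : Wj j ⁻¹' B = A := by
      ext ω
      constructor
      · intro hω
        have h2 : (ω, θ0) ∈ Yj j ⁻¹' B := hω
        rw [hpre] at h2
        exact h2
      · intro hω
        have h2 : (ω, θ0) ∈ Prod.fst ⁻¹' A := hω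
        rw [← hpre] at h2
        exact h2
    rw [hset]
    exact hA
  set Nj : ℕ → Set Ω := fun j => {ω | Wj j ω ≠ Wj 0 ω} with hNjdef
  have hWjm0 : ∀ j, Measurable[m0] (Wj j) := fun j => (hWm j).mono (F.le _) le_rfl
  have hNjm : ∀ j, MeasurableSet[m0] (Nj j) := by
    intro j
    simpa [hNjdef, Set.compl_setOf] using (measurableSet_eq_fun (hWjm0 j) (hWjm0 0)).compl
  have hWfstYj : ∀ j, (fun p : Ω × Set.Icc (0:ℝ) T => Wj j p.1) = Yj j :=
    fun j => funext fun p => (hYW j p).symm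
  have hPNj : ∀ j, P (Nj j) = 0 := by
    intro j
    have e1 : (fun p : Ω × Set.Icc (0:ℝ) T => Wj j p.1) =ᵐ[Pbar] fun p => Wj 0 p.1 := by
      rw [hWfstYj j, hWfstYj 0]
      exact (hYjY j).trans (hYjY 0).symm
    have e2 : Pbar (Prod.fst ⁻¹' Nj j) = 0 := ae_iff.mp e1
    rw [← hmapbar, Measure.map_apply measurable_fst (hNjm j)]
    exact e2
  set NN : Set Ω := ⋃ j, Nj j with hNNdef
  have hNNm : MeasurableSet[m0] NN := MeasurableSet.iUnion hNjm
  have hPNN : P NN = 0 := measure_iUnion_null hPNj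
  have hNN0 : MeasurableSet[F 0] NN := husual_complete NN hNNm hPNN
  set W : Ω → ℝ := fun ω => if ω ∈ NN then 0 else Wj 0 ω with hWdef
  have hWeq : ∀ j, W = fun ω => if ω ∈ NN then 0 else Wj j ω := by
    intro j; funext ω
    by_cases hω : ω ∈ NN
    · simp [hWdef, hω]
    · have h2 : ω ∉ Nj j := fun hc => hω (Set.mem_iUnion.mpr ⟨j, hc⟩)
      have hval : Wj j ω = Wj 0 ω := not_ne_iff.mp h2
      simp [hWdef, hω, hval]
  have hWsj : ∀ j, Measurable[F (sj j)] W := by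
    intro j
    rw [hWeq j]
    have hcond : MeasurableSet[F (sj j)] NN :=
      (F.mono (le_trans ht.1 (hsj1 j).le)) _ hNN0
    exact Measurable.ite hcond measurable_const (hWm j)
  have hWt : Measurable[F t] W := by
    intro B hB
    rw [husual_right t, MeasurableSpace.measurableSet_iInf]
    intro s'
    rw [MeasurableSpace.measurableSet_iInf]
    intro hs'
    obtain ⟨n, hn⟩ := exists_nat_gt ((T - t)/(s' - t))
    have h1 : (0:ℝ) < s' - t := sub_pos.mpr hs'
    have h2 : (T - t)/(s' - t) < (n:ℝ) + 1 := hn.trans (by linarith)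
    have h3 : T - t < ((n:ℝ)+1) * (s' - t) := by
      have := (div_lt_iff₀ h1).mp h2
      linarith [this]
    have h4 : sj n ≤ s' := by
      have h5 : (T - t)/((n:ℝ)+1) < s' - t := by
        rw [div_lt_iff₀ (by positivity : (0:ℝ) < (n:ℝ)+1)]
        calc T - t < ((n:ℝ)+1) * (s' - t) := h3
          _ = (s' - t) * ((n:ℝ)+1) := mul_comm _ _
      simp only [hsj]; linarith
    exact (F.mono h4) _ (hWsj n hB)
  have hWfst : (fun p : Ω × Set.Icc (0:ℝ) T => W p.1) =ᵐ[Pbar] Y := by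
    have h0 : (fun p : Ω × Set.Icc (0:ℝ) T => Wj 0 p.1) =ᵐ[Pbar] Y := by
      rw [hWfstYj 0]; exact hYjY 0
    have hnull : Pbar (Prod.fst ⁻¹' NN) = 0 := by
      rw [← Measure.map_apply measurable_fst hNNm, hmapbar]
      exact hPNN
    have hae : ∀ᵐ p ∂Pbar, p.1 ∉ NN := by
      rw [ae_iff]
      convert hnull using 2
      ext p
      simp
    filter_upwards [h0, hae] with p hp hnp
    have hWp : W p.1 = Wj 0 p.1 := if_neg hnp
    rw [hWp, hp]
  haveI hSFt' : SigmaFinite (Pbar.trim (hκ_le t)) := by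
    haveI := isFiniteMeasure_trim (μ := Pbar) (hκ_le t); infer_instance
  have h1 : Pbar[Y|MeasurableSpace.comap Prod.fst (F t)]
      =ᵐ[Pbar] Pbar[Ind T t|MeasurableSpace.comap Prod.fst (F t)] :=
    condExp_condExp_of_le (hκκ t) hκm_le
  have h2 : Pbar[Y|MeasurableSpace.comap Prod.fst (F t)]
      =ᵐ[Pbar] Pbar[(fun p : Ω × Set.Icc (0:ℝ) T => W p.1)|
        MeasurableSpace.comap Prod.fst (F t)] :=
    condExp_congr_ae hWfst.symm
  have h3 : Pbar[(fun p : Ω × Set.Icc (0:ℝ) T => W p.1)|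
      MeasurableSpace.comap Prod.fst (F t)] = fun p : Ω × Set.Icc (0:ℝ) T => W p.1 :=
    condExp_of_stronglyMeasurable (hκ_le t)
      ((hWt.comp (comap_measurable Prod.fst)).stronglyMeasurable)
      (integrable_condExp.congr hWfst.symm)
  calc Y =ᵐ[Pbar] (fun p : Ω × Set.Icc (0:ℝ) T => W p.1) := hWfst.symm
    _ = Pbar[(fun p : Ω × Set.Icc (0:ℝ) T => W p.1)|
        MeasurableSpace.comap Prod.fst (F t)] := h3.symm
    _ =ᵐ[Pbar] Pbar[Y|MeasurableSpace.comap Prod.fst (F t)] := h2.symm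
    _ =ᵐ[Pbar] Pbar[Ind T t|MeasurableSpace.comap Prod.fst (F t)] := h1


end
end
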